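/- arXiv:1408.0948 — 6 statements merged into one kernel-verified Lean document; each statement's English description precedes it below -/
import Mathlib

section
/- For every p ≥ 3, every k ≥ 2, and every simple graph G on k vertices, setting m = 2k(k−1), the stable set polytope conv(SSP(G)) is affinely equivalent to an exposed face of the p-index assignment polytope conv(PAP^p_m). -/
/-- The vertex set of the stable set polytope of a simple graph `G` on `Fin k`. -/
def SSP {k : ℕ} (G : SimpleGraph (Fin k)) : Set (Fin k → ℝ) :=
  {y | (∀ i, y i = 0 ∨ y i = 1) ∧ ∀ i j, G.Adj i j → y i + y j ≤ 1}

/-- The vertex set of the `p`-index assignment polytope. -/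
def PAP (p m : ℕ) : Set ((Fin p → Fin m) → ℝ) :=
  {x | (∀ t, x t = 0 ∨ x t = 1) ∧
       ∀ (r : Fin p) (v : Fin m),
         ∑ t ∈ Finset.univ.filter (fun t : Fin p → Fin m => t r = v), x t = 1}

open Finset

namespace St12

attribute [local instance] Classical.propDecidable

/-- 0/1 functions summing to 1 over a finset have a unique 1. -/
lemma exists_one {ι : Type*} (s : Finset ι) (f : ι → ℝ)
    (h01 : ∀ i ∈ s, f i = 0 ∨ f i = 1) (hs : ∑ i ∈ s, f i = 1) :
    ∃ a ∈ s, f a = 1 ∧ ∀ b ∈ s, b ≠ a → f b = 0 := by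
  classical
  obtain ⟨a, ha, hfa⟩ : ∃ a ∈ s, f a ≠ 0 := by
    by_contra h; push_neg at h
    rw [Finset.sum_eq_zero h] at hs; norm_num at hs
  have hfa1 : f a = 1 := (h01 a ha).resolve_left hfa
  refine ⟨a, ha, hfa1, ?_⟩
  intro b hb hba
  rcases h01 b hb with h0 | h1
  · exact h0
  · exfalso
    have hsub : ({a, b} : Finset ι) ⊆ s := by
      intro x hx; simp at hx; rcases hx with rfl | rfl <;> assumption
    have hle : ∑ i ∈ ({a, b} : Finset ι), f i ≤ ∑ i ∈ s, f i := by
      refine Finset.sum_le_sum_of_subset_of_nonneg hsub ?_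
      intro i hi _; rcases h01 i hi with h | h <;> rw [h] <;> norm_num
    rw [Finset.sum_pair (Ne.symm hba), hfa1, h1, hs] at hle
    norm_num at hle

open Fin.NatCast in
/-- Forcing lemma on a cyclic group `Fin N`. -/
lemma forceA {N : ℕ} [NeZero N] (g : Fin N → Fin N) (hg : Function.Injective g)
    (h : ∀ q, g q = q ∨ g q = q + 1) :
    (∀ q, g q = q) ∨ (∀ q, g q = q + 1) := by
  by_cases H : ∀ q, g q = q
  · exact Or.inl H
  push_neg at H
  obtain ⟨b, hb⟩ := H
  have hb1 : g b = b + 1 := (h b).resolve_left hb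
  have h10 : (1 : Fin N) ≠ 0 := by
    intro h0
    apply hb; rw [hb1, h0, add_zero]
  right
  intro q
  by_contra hq
  have hq' : g q = q := (h q).resolve_right hq
  have key : ∀ t : ℕ, g (q - (t : Fin N)) = q - (t : Fin N) := by
    intro t
    induction t with
    | zero => simpa using hq'
    | succ t ih =>
      rcases h (q - ((t + 1 : ℕ) : Fin N)) with h1 | h2
      · exact h1
      · exfalso
        have hcast : (((t + 1 : ℕ)) : Fin N) = ((t : ℕ) : Fin N) + 1 := by
          push_cast; ring
        have h2' : g (q - ((t + 1 : ℕ) : Fin N)) = q - ((t : ℕ) : Fin N) := by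
          rw [h2, hcast]; abel
        have := hg (h2'.trans ih.symm)
        rw [hcast] at this
        have : ((t : ℕ) : Fin N) + 1 = (t : ℕ) := by
          have := sub_right_injective this
          exact this
        have : (1 : Fin N) = 0 := by
          have h' := this
          nth_rewrite 2 [← add_zero ((t : ℕ) : Fin N)] at h'
          exact add_left_cancel h'
        exact h10 this
  have hbfix : g b = b := by
    have hk := key ((q - b).val)
    rw [Fin.cast_val_eq_self (q - b), sub_sub_cancel] at hk
    exact hk
  exact hb hbfix

lemma finRotate_ne {N : ℕ} (hN : 2 ≤ N) (x : Fin N) : finRotate N x ≠ x := by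
  obtain ⟨N', rfl⟩ : ∃ N', N = N' + 1 := ⟨N - 1, by omega⟩
  rw [finRotate_succ_apply]
  intro h
  have h1 : (1 : Fin (N' + 1)) = 0 := by
    nth_rewrite 2 [← add_zero x] at h
    exact add_left_cancel h
  have h2 : 1 % (N' + 1) = 0 := by
    simpa [Fin.val_one'] using congrArg Fin.val h1
  rw [Nat.mod_eq_of_lt (by omega)] at h2
  omega

lemma forceRot {N : ℕ} (hN : N ≠ 0) (g : Fin N → Fin N) (hg : Function.Injective g)
    (h : ∀ q, g q = q ∨ g q = finRotate N q) :
    (∀ q, g q = q) ∨ (∀ q, g q = finRotate N q) := by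
  obtain ⟨N', rfl⟩ : ∃ N', N = N' + 1 := ⟨N - 1, by omega⟩
  simp only [finRotate_succ_apply] at h ⊢
  exact forceA g hg h

variable (n : ℕ)

/-- number of values -/
abbrev M : ℕ := 2 * (n + 2) * (n + 1)

instance : NeZero (2 * (n + 1)) := ⟨by omega⟩

def eV : Fin (M n) ≃ Fin (n + 2) × Fin (2 * (n + 1)) :=
  (finCongr (by ring)).trans finProdFinEquiv.symm

def q2 : Fin (2 * (n + 1)) ≃ Fin (n + 1) × Fin 2 :=
  (finCongr (by ring)).trans finProdFinEquiv.symm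

variable {n}

def vi (v : Fin (M n)) : Fin (n + 2) := (eV n v).1
def vq (v : Fin (M n)) : Fin (2 * (n + 1)) := (eV n v).2
def mkV (i : Fin (n + 2)) (q : Fin (2 * (n + 1))) : Fin (M n) := (eV n).symm (i, q)
def vj' (v : Fin (M n)) : Fin (n + 1) := (q2 n (vq v)).1
def vε (v : Fin (M n)) : Fin 2 := (q2 n (vq v)).2
def vj (v : Fin (M n)) : Fin (n + 2) := (vi v).succAbove (vj' v)

@[simp] lemma vi_mkV (i q) : vi (n := n) (mkV i q) = i := by simp [vi, mkV]
@[simp] lemma vq_mkV (i q) : vq (n := n) (mkV i q) = q := by simp [vq, mkV]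
@[simp] lemma mkV_vi_vq (v : Fin (M n)) : mkV (vi v) (vq v) = v := by simp [vi, vq, mkV]

lemma mkV_inj {i i' : Fin (n+2)} {q q'} (h : mkV (n := n) i q = mkV i' q') : i = i' ∧ q = q' := by
  have := (eV n).symm.injective h
  exact ⟨congrArg Prod.fst this, congrArg Prod.snd this⟩

lemma vj_ne_vi (v : Fin (M n)) : vj v ≠ vi v := Fin.succAbove_ne _ _

def ρ : Equiv.Perm (Fin (M n)) :=
  (eV n).trans (((Equiv.refl (Fin (n + 2))).prodCongr (Equiv.addRight (1 : Fin (2 * (n + 1))))).trans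
    (eV n).symm)

lemma ρ_apply (v : Fin (M n)) : ρ v = mkV (vi v) (vq v + 1) := rfl

@[simp] lemma vi_ρ (v : Fin (M n)) : vi (ρ v) = vi v := by rw [ρ_apply]; simp
@[simp] lemma vq_ρ (v : Fin (M n)) : vq (ρ v) = vq v + 1 := by rw [ρ_apply]; simp

lemma one_ne_zero_fin : (1 : Fin (2 * (n + 1))) ≠ 0 := by
  intro h
  have h2 : 1 % (2 * (n + 1)) = 0 := by
    simpa [Fin.val_one'] using congrArg Fin.val h
  rw [Nat.mod_eq_of_lt (by omega)] at h2
  omega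

lemma ρ_ne (v : Fin (M n)) : ρ v ≠ v := by
  intro h
  have h1 : vq (ρ v) = vq v := by rw [h]
  rw [vq_ρ] at h1
  have : (1 : Fin (2 * (n + 1))) = 0 := by
    nth_rewrite 2 [← add_zero (vq v)] at h1
    exact add_left_cancel h1
  exact one_ne_zero_fin this

variable (G : SimpleGraph (Fin (n + 2)))

def isEdge (v : Fin (M n)) : Prop := vε v = 0 ∧ G.Adj (vi v) (vj v)
def activeV (v : Fin (M n)) : Prop := vε v = 1 ∨ G.Adj (vi v) (vj v)
def τidx (v : Fin (M n)) : Fin (n + 2) := if vε v = 1 then vi v else vj v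

lemma active_of_edge {v : Fin (M n)} (h : isEdge G v) : activeV G v := Or.inr h.2
lemma τidx_of_edge {v : Fin (M n)} (h : isEdge G v) : τidx v = vj v := by
  have h0 : vε v ≠ 1 := by rw [h.1]; decide
  rw [τidx, if_neg h0]

noncomputable def Zs (j : Fin (n + 2)) : Finset (Fin (M n)) :=
  univ.filter (fun v => activeV G v ∧ τidx v = j)

lemma mem_Zs {j v} : v ∈ Zs G j ↔ activeV G v ∧ τidx v = j := by simp [Zs]

/-- the canonical equality value for `i` -/
def eqV (i : Fin (n + 2)) : Fin (M n) := mkV i ((q2 n).symm (0, 1))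

@[simp] lemma vi_eqV (i) : vi (n := n) (eqV i) = i := by simp [eqV]
@[simp] lemma vε_eqV (i) : vε (n := n) (eqV i) = 1 := by simp [eqV, vε]
@[simp] lemma vj'_eqV (i) : vj' (n := n) (eqV i) = 0 := by simp [eqV, vj']

lemma not_edge_eqV (i) : ¬ isEdge G (eqV (n := n) i) := by
  intro h; have := h.1; rw [vε_eqV] at this; exact absurd this (by decide)

lemma τidx_eqV (i : Fin (n+2)) : τidx (eqV (n := n) i) = i := by
  rw [τidx, if_pos (vε_eqV i), vi_eqV]

lemma active_eqV (i) : activeV G (eqV (n := n) i) := Or.inl (vε_eqV i)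

lemma eqV_mem_Zs (i) : eqV (n := n) i ∈ Zs G i :=
  (mem_Zs G).2 ⟨active_eqV G i, τidx_eqV i⟩

lemma Zs_nonempty (j) : (Zs G j).Nonempty := ⟨eqV j, eqV_mem_Zs G j⟩

lemma Zs_card_ne_zero (j) : (Zs G j).card ≠ 0 := by
  simpa [Finset.card_ne_zero] using (Zs_nonempty G j).card_ne_zero

noncomputable def ζ (j : Fin (n + 2)) : Equiv.Perm (Fin (M n)) :=
  (finRotate (Zs G j).card).extendDomain (Zs G j).equivFin.symm

lemma ζ_apply_mem {j} {v : Fin (M n)} (h : v ∈ Zs G j) :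
    ζ G j v = ((Zs G j).equivFin.symm (finRotate _ ((Zs G j).equivFin ⟨v, h⟩)) : _) := by
  rw [ζ, Equiv.Perm.extendDomain_apply_subtype _ _ h]
  simp

lemma ζ_mem {j} {v : Fin (M n)} (h : v ∈ Zs G j) : ζ G j v ∈ Zs G j := by
  rw [ζ_apply_mem G h]
  exact Subtype.coe_prop _

lemma ζ_not_mem {j} {v : Fin (M n)} (h : v ∉ Zs G j) : ζ G j v = v :=
  Equiv.Perm.extendDomain_apply_not_subtype _ _ h

lemma ζ_symm_mem {j} {v : Fin (M n)} (h : v ∈ Zs G j) : (ζ G j).symm v ∈ Zs G j := by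
  by_contra hc
  have h2 : ζ G j ((ζ G j).symm v) = (ζ G j).symm v := ζ_not_mem G hc
  rw [Equiv.apply_symm_apply] at h2
  rw [← h2] at hc; exact hc h

lemma ζ_ne {j} {v : Fin (M n)} (h : v ∈ Zs G j) (hc : 2 ≤ (Zs G j).card) : ζ G j v ≠ v := by
  rw [ζ_apply_mem G h]
  intro he
  have : (Zs G j).equivFin.symm (finRotate _ ((Zs G j).equivFin ⟨v, h⟩)) = ⟨v, h⟩ :=
    Subtype.ext he
  have h2 := congrArg (Zs G j).equivFin this
  rw [Equiv.apply_symm_apply] at h2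
  exact finRotate_ne hc _ h2

/-- forcing for σ on the fiber of `i` -/
lemma forceσ (σ : Fin (M n) → Fin (M n)) (hσ : Function.Injective σ)
    (h : ∀ v, σ v = v ∨ σ v = ρ v) (i : Fin (n + 2)) :
    (∀ v, vi v = i → σ v = v) ∨ (∀ v, vi v = i → σ v = ρ v) := by
  have hfst : ∀ q, vi (σ (mkV i q)) = i := by
    intro q
    rcases h (mkV i q) with h1 | h1 <;> rw [h1] <;> simp
  set g : Fin (2 * (n + 1)) → Fin (2 * (n + 1)) := fun q => vq (σ (mkV i q)) with hg
  have hrec : ∀ q, σ (mkV i q) = mkV i (g q) := by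
    intro q
    conv_lhs => rw [← mkV_vi_vq (σ (mkV i q))]
    rw [hfst q]
  have hginj : Function.Injective g := by
    intro q q' he
    have : σ (mkV i q) = σ (mkV i q') := by rw [hrec, hrec, he]
    have := hσ this
    exact (mkV_inj this).2
  have hgmem : ∀ q, g q = q ∨ g q = q + 1 := by
    intro q
    rcases h (mkV i q) with h1 | h1
    · left; rw [hg]; simp only; rw [h1]; simp
    · right; rw [hg]; simp only; rw [h1, vq_ρ]; simp
  rcases forceA g hginj hgmem with hc | hc
  · left
    intro v hv
    have hv' : v = mkV i (vq v) := by rw [← hv, mkV_vi_vq]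
    rw [hv', hrec, hc]
  · right
    intro v hv
    have hv' : v = mkV i (vq v) := by rw [← hv, mkV_vi_vq]
    rw [hv', hrec, hc, ρ_apply]
    simp

/-- forcing for τ on `Zs j` -/
lemma forceτ (τ : Fin (M n) → Fin (M n)) (hτ : Function.Injective τ) (j : Fin (n + 2))
    (h : ∀ v ∈ Zs G j, τ v = v ∨ τ v = ζ G j v) :
    (∀ v ∈ Zs G j, τ v = v) ∨ (∀ v ∈ Zs G j, τ v = ζ G j v) := by
  set N := (Zs G j).card with hN
  set f := (Zs G j).equivFin with hf
  have hmem : ∀ v ∈ Zs G j, τ v ∈ Zs G j := by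
    intro v hv
    rcases h v hv with h1 | h1
    · rw [h1]; exact hv
    · rw [h1]; exact ζ_mem G hv
  set g : Fin N → Fin N := fun x => f ⟨τ (f.symm x), hmem _ (f.symm x).2⟩ with hg
  have hginj : Function.Injective g := by
    intro x x' he
    have := f.injective he
    have h2 : τ (f.symm x) = τ (f.symm x') := congrArg Subtype.val this
    have := hτ h2
    have := f.symm.injective (Subtype.ext this)
    exact this
  have hgmem : ∀ x, g x = x ∨ g x = finRotate N x := by
    intro x
    rcases h (f.symm x) (f.symm x).2 with h1 | h1
    · left
      rw [hg]; simp only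
      have : (⟨τ (f.symm x), hmem _ (f.symm x).2⟩ : {v // v ∈ Zs G j}) = f.symm x :=
        Subtype.ext h1
      rw [this, Equiv.apply_symm_apply]
    · right
      rw [hg]; simp only
      have hform : ζ G j (f.symm x) = (f.symm (finRotate N (f ⟨(f.symm x : Fin (M n)), (f.symm x).2⟩)) : _) :=
        ζ_apply_mem G (f.symm x).2
      have hx : (⟨(f.symm x : Fin (M n)), (f.symm x).2⟩ : {v // v ∈ Zs G j}) = f.symm x :=
        Subtype.ext rfl
      rw [hx, Equiv.apply_symm_apply] at hform
      have : (⟨τ (f.symm x), hmem _ (f.symm x).2⟩ : {v // v ∈ Zs G j}) = f.symm (finRotate N x) := by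
        apply Subtype.ext
        show τ (↑(f.symm x)) = _
        rw [h1, hform]
      rw [this, Equiv.apply_symm_apply]
  rcases forceRot (hN ▸ Zs_card_ne_zero G j) g hginj hgmem with hc | hc
  · left
    intro v hv
    have := hc (f ⟨v, hv⟩)
    rw [hg] at this; simp only at this
    rw [Equiv.symm_apply_apply] at this
    have := congrArg Subtype.val (f.injective this)
    simpa using this
  · right
    intro v hv
    have := hc (f ⟨v, hv⟩)
    rw [hg] at this; simp only at this
    rw [Equiv.symm_apply_apply] at this
    have h2 := congrArg Subtype.val (congrArg f.symm this)
    rw [Equiv.symm_apply_apply] at h2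
    simp only at h2
    rw [h2, ← ζ_apply_mem G hv]

noncomputable section

def KAτ (v : Fin (M n)) : Fin (M n) := if isEdge G v then ζ G (vj v) v else v
def KBτ (v : Fin (M n)) : Fin (M n) := if activeV G v then ζ G (τidx v) v else v
def KA (v : Fin (M n)) : Fin (M n) × Fin (M n) := (v, KAτ G v)
def KB (v : Fin (M n)) : Fin (M n) × Fin (M n) := (ρ v, KBτ G v)
def KC (v : Fin (M n)) : Fin (M n) × Fin (M n) := (ρ v, v)

def keyF (v : Fin (M n)) : Finset (Fin (M n) × Fin (M n)) :=
  if isEdge G v then {KA G v, KB G v, KC v} else {KA G v, KB G v}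

/-- real-valued label of the design cell `(v, w, u)` at the point `y`. -/
def labR (v w u : Fin (M n)) (y : Fin (n + 2) → ℝ) : ℝ :=
  (if (w, u) = KA G v then y (vi v) else 0) +
  (if (w, u) = KB G v then 1 - y (vi v) - (if isEdge G v then y (vj v) else 0) else 0) +
  (if (w, u) = KC v then (if isEdge G v then y (vj v) else 0) else 0)

def pj (i : Fin (n + 2)) : (Fin (n + 2) → ℝ) →ᵃ[ℝ] ℝ := (LinearMap.proj i).toAffineMap

/-- affine-map-valued label -/
def lab (v w u : Fin (M n)) : (Fin (n + 2) → ℝ) →ᵃ[ℝ] ℝ :=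
  (if (w, u) = KA G v then pj (vi v) else 0) +
  (if (w, u) = KB G v then
      AffineMap.const ℝ _ (1 : ℝ) - pj (vi v) - (if isEdge G v then pj (vj v) else 0)
    else 0) +
  (if (w, u) = KC v then (if isEdge G v then pj (vj v) else 0) else 0)

lemma lab_apply (v w u : Fin (M n)) (y : Fin (n + 2) → ℝ) :
    lab G v w u y = labR G v w u y := by
  simp only [lab, labR, pj, apply_ite (fun f : (Fin (n + 2) → ℝ) →ᵃ[ℝ] ℝ => f y),
    AffineMap.coe_add, AffineMap.coe_sub, AffineMap.coe_zero, Pi.add_apply, Pi.sub_apply,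
    Pi.zero_apply, AffineMap.const_apply, LinearMap.coe_toAffineMap, LinearMap.proj_apply]

section Tuples

abbrev Tup (n P : ℕ) : Type := Fin (P + 3) → Fin (M n)

variable (P : ℕ)

def i0 : Fin (P + 3) := 0
def i1 : Fin (P + 3) := 1
def i2 : Fin (P + 3) := 2

lemma i0_ne_i1 : i0 P ≠ i1 P := by simp [i0, i1, Fin.ext_iff]
lemma i0_ne_i2 : i0 P ≠ i2 P := by simp [i0, i2, Fin.ext_iff, Nat.mod_eq_of_lt (show 2 < P + 3 by omega)]
lemma i1_ne_i2 : i1 P ≠ i2 P := by simp [i1, i2, Fin.ext_iff, Nat.mod_eq_of_lt (show 2 < P + 3 by omega)]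

def tailOK (t : Tup n P) : Prop := ∀ r : Fin (P + 3), r ≠ i1 P → r ≠ i2 P → t r = t (i0 P)

def tup (v w u : Fin (M n)) : Tup n P := fun r => if r = i1 P then w else if r = i2 P then u else v

@[simp] lemma tup_i0 (v w u : Fin (M n)) : tup P v w u (i0 P) = v := by
  simp [tup, i0_ne_i1 P, i0_ne_i2 P]
@[simp] lemma tup_i1 (v w u : Fin (M n)) : tup P v w u (i1 P) = w := by
  simp [tup]
@[simp] lemma tup_i2 (v w u : Fin (M n)) : tup P v w u (i2 P) = u := by
  simp [tup, (i1_ne_i2 P).symm]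

lemma tailOK_tup (v w u : Fin (M n)) : tailOK P (tup P v w u) := by
  intro r h1 h2
  rw [tup_i0]
  simp [tup, h1, h2]

lemma eq_tup_of_tailOK {t : Tup n P} (h : tailOK P t) :
    t = tup P (t (i0 P)) (t (i1 P)) (t (i2 P)) := by
  funext r
  by_cases h1 : r = i1 P
  · rw [h1, tup_i1]
  by_cases h2 : r = i2 P
  · rw [h2, tup_i2]
  simp only [tup]; rw [if_neg h1, if_neg h2, h r h1 h2]

/-- the affine embedding -/
def Φ : (Fin (n + 2) → ℝ) →ᵃ[ℝ] (Tup n P → ℝ) :=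
  AffineMap.pi (fun t : Tup n P =>
    if tailOK P t then lab G (t (i0 P)) (t (i1 P)) (t (i2 P)) else 0)

lemma Φ_apply (y : Fin (n + 2) → ℝ) (t : Tup n P) :
    Φ G P y t = if tailOK P t then labR G (t (i0 P)) (t (i1 P)) (t (i2 P)) y else 0 := by
  rw [Φ, AffineMap.pi_apply, apply_ite (fun f : (Fin (n + 2) → ℝ) →ᵃ[ℝ] ℝ => f y),
    lab_apply, AffineMap.coe_zero, Pi.zero_apply]

lemma Φ_tup (y : Fin (n + 2) → ℝ) (v w u : Fin (M n)) :
    Φ G P y (tup P v w u) = labR G v w u y := by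
  rw [Φ_apply, if_pos (tailOK_tup P v w u), tup_i0, tup_i1, tup_i2]

/-- the design set -/
def Dset : Finset (Tup n P) :=
  univ.filter (fun t => tailOK P t ∧ (t (i1 P), t (i2 P)) ∈ keyF G (t (i0 P)))

lemma Φ_eq_zero_off {y : Fin (n + 2) → ℝ} {t : Tup n P} (h : t ∉ Dset G P) :
    Φ G P y t = 0 := by
  rw [Φ_apply]
  by_cases ht : tailOK P t
  · rw [if_pos ht]
    have hk : (t (i1 P), t (i2 P)) ∉ keyF G (t (i0 P)) := by
      intro hk; exact h (by simp [Dset, ht, hk])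
    set v := t (i0 P)
    rw [labR]
    by_cases he : isEdge G v
    · rw [keyF, if_pos he] at hk
      simp only [Finset.mem_insert, Finset.mem_singleton, not_or] at hk
      rw [if_neg hk.1, if_neg hk.2.1, if_neg hk.2.2]; ring
    · rw [keyF, if_neg he] at hk
      simp only [Finset.mem_insert, Finset.mem_singleton, not_or] at hk
      rw [if_neg hk.1, if_neg hk.2, if_neg he]
      simp
  · rw [if_neg ht]

end Tuples

lemma vi_ρ_symm (w : Fin (M n)) : vi (ρ.symm w) = vi w := by
  conv_rhs => rw [← Equiv.apply_symm_apply ρ w, vi_ρ]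

lemma fin2_cases (x : Fin 2) : x = 0 ∨ x = 1 :=
  match x with
  | 0 => Or.inl rfl
  | 1 => Or.inr rfl

lemma vε_one_of_active_not_edge {v : Fin (M n)} (ha : activeV G v) (he : ¬ isEdge G v) :
    vε v = 1 := by
  rcases fin2_cases (vε v) with h0 | h1
  · rcases ha with h | h
    · exact h
    · exact absurd ⟨h0, h⟩ he
  · exact h1

lemma τidx_eq_vi {v : Fin (M n)} (ha : activeV G v) (he : ¬ isEdge G v) : τidx v = vi v := by
  rw [τidx, if_pos (vε_one_of_active_not_edge G ha he)]

/-- pointwise unfolding of a pair-keyed indicator -/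
lemma ite_pair (k : Fin (M n) × Fin (M n)) (c : ℝ) (w u : Fin (M n)) :
    (if (w, u) = k then c else 0) = if u = k.2 then (if w = k.1 then c else 0) else 0 := by
  by_cases h1 : u = k.2 <;> by_cases h2 : w = k.1 <;>
    simp [Prod.ext_iff, h1, h2]

lemma ite_pair' (k : Fin (M n) × Fin (M n)) (c : ℝ) (w u : Fin (M n)) :
    (if (w, u) = k then c else 0) = if w = k.1 then (if u = k.2 then c else 0) else 0 := by
  by_cases h1 : u = k.2 <;> by_cases h2 : w = k.1 <;>
    simp [Prod.ext_iff, h1, h2]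

lemma sum_sum_ite (k : Fin (M n) × Fin (M n)) (c : ℝ) :
    (∑ w : Fin (M n), ∑ u : Fin (M n), if (w, u) = k then c else 0) = c := by
  simp only [ite_pair' (n := n) k c]
  simp [Finset.sum_ite_eq']

lemma sum_u_ite (k : Fin (M n) × Fin (M n)) (c : ℝ) (w : Fin (M n)) :
    (∑ u : Fin (M n), if (w, u) = k then c else 0) = if w = k.1 then c else 0 := by
  simp only [ite_pair' (n := n) k c]
  simp [Finset.sum_ite_eq']

lemma sum_w_ite (k : Fin (M n) × Fin (M n)) (c : ℝ) (u : Fin (M n)) :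
    (∑ w : Fin (M n), if (w, u) = k then c else 0) = if u = k.2 then c else 0 := by
  simp only [ite_pair (n := n) k c]
  simp [Finset.sum_ite_eq']

lemma ite_add_ite_same (c : Prop) [Decidable c] (x z : ℝ) :
    (if c then x else 0) + (if c then z else 0) = if c then x + z else 0 := by
  by_cases h : c <;> simp [h]

/-- row sums -/
lemma sum_row (v : Fin (M n)) (y : Fin (n + 2) → ℝ) :
    ∑ w : Fin (M n), ∑ u : Fin (M n), labR G v w u y = 1 := by
  simp only [labR, Finset.sum_add_distrib, sum_sum_ite]
  by_cases he : isEdge G v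
  · simp only [he, if_true]; ring
  · simp only [he, if_false]; ring

/-- axis-σ column sums -/
lemma sum_col_σ (w : Fin (M n)) (y : Fin (n + 2) → ℝ) :
    ∑ v : Fin (M n), ∑ u : Fin (M n), labR G v w u y = 1 := by
  have inner : ∀ v, ∑ u : Fin (M n), labR G v w u y =
      (if w = v then y (vi v) else 0) + (if w = ρ v then 1 - y (vi v) else 0) := by
    intro v
    simp only [labR, Finset.sum_add_distrib, sum_u_ite]
    have h1 : (KA G v).1 = v := rfl
    have h2 : (KB G v).1 = ρ v := rfl
    have h3 : (KC v).1 = ρ v := rfl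
    rw [h1, h2, h3, add_assoc, ite_add_ite_same]
    by_cases he : isEdge G v <;> by_cases hw : w = ρ v <;> simp [he, hw] <;> ring
  simp only [inner, Finset.sum_add_distrib]
  rw [Finset.sum_ite_eq Finset.univ w (fun v => y (vi v))]
  have h2 : (∑ v : Fin (M n), if w = ρ v then 1 - y (vi v) else 0) = 1 - y (vi w) := by
    rw [Finset.sum_eq_single (ρ.symm w)]
    · rw [if_pos (Equiv.apply_symm_apply ρ w).symm, vi_ρ_symm]
    · intro b _ hb
      rw [if_neg]
      intro hc
      exact hb (by rw [hc, Equiv.symm_apply_apply])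
    · intro h; exact absurd (Finset.mem_univ _) h
  rw [h2]
  simp

lemma mem_Zs_self {v : Fin (M n)} (ha : activeV G v) : v ∈ Zs G (τidx v) :=
  (mem_Zs G).2 ⟨ha, rfl⟩

lemma active_KBτ {v : Fin (M n)} (ha : activeV G v) : KBτ G v ∈ Zs G (τidx v) := by
  rw [KBτ, if_pos ha]
  exact ζ_mem G (mem_Zs_self G ha)

/-- per-`v` regrouping of the τ-parts -/
lemma regroup (v u : Fin (M n)) (y : Fin (n + 2) → ℝ) :
    (if u = KAτ G v then y (vi v) else 0) +
      (if u = KBτ G v then 1 - y (vi v) - (if isEdge G v then y (vj v) else 0) else 0) +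
      (if u = v then (if isEdge G v then y (vj v) else 0) else 0) =
    (if u = v then (if activeV G v then y (τidx v) else 1) else 0) +
      (if u = KBτ G v then (if activeV G v then 1 - y (τidx v) else 0) else 0) := by
  by_cases he : isEdge G v
  · have ha : activeV G v := active_of_edge G he
    have hτ : τidx v = vj v := τidx_of_edge G he
    have hKA : KAτ G v = KBτ G v := by rw [KAτ, KBτ, if_pos he, if_pos ha, hτ]
    rw [hKA]
    simp only [if_pos he, if_pos ha, hτ]
    by_cases h1 : u = KBτ G v <;> by_cases h2 : u = v
    · simp only [if_pos h1, if_pos h2]; ring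
    · simp only [if_pos h1, if_neg h2]; ring
    · simp only [if_neg h1, if_pos h2]; ring
    · simp only [if_neg h1, if_neg h2]; ring
  · have hKA : KAτ G v = v := by rw [KAτ, if_neg he]
    rw [hKA]
    simp only [if_neg he]
    by_cases ha : activeV G v
    · have hτ : τidx v = vi v := τidx_eq_vi G ha he
      simp only [if_pos ha, hτ]
      by_cases h1 : u = KBτ G v <;> by_cases h2 : u = v
      · simp only [if_pos h1, if_pos h2]; ring
      · simp only [if_pos h1, if_neg h2]; ring
      · simp only [if_neg h1, if_pos h2]; ring
      · simp only [if_neg h1, if_neg h2]; ring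
    · have hKB : KBτ G v = v := by rw [KBτ, if_neg ha]
      rw [hKB]
      simp only [if_neg ha]
      by_cases h2 : u = v
      · simp only [if_pos h2]; ring
      · simp only [if_neg h2]; ring

/-- axis-τ column sums -/
lemma sum_col_τ (u : Fin (M n)) (y : Fin (n + 2) → ℝ) :
    ∑ v : Fin (M n), ∑ w : Fin (M n), labR G v w u y = 1 := by
  have inner : ∀ v, ∑ w : Fin (M n), labR G v w u y =
      (if u = v then (if activeV G v then y (τidx v) else 1) else 0) +
        (if u = KBτ G v then (if activeV G v then 1 - y (τidx v) else 0) else 0) := by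
    intro v
    simp only [labR, Finset.sum_add_distrib, sum_w_ite]
    have h1 : (KA G v).2 = KAτ G v := rfl
    have h2 : (KB G v).2 = KBτ G v := rfl
    have h3 : (KC v).2 = v := rfl
    rw [h1, h2, h3, regroup]
  simp only [inner, Finset.sum_add_distrib]
  rw [Finset.sum_ite_eq Finset.univ u (fun v => if activeV G v then y (τidx v) else 1)]
  simp only [Finset.mem_univ, if_true]
  by_cases hu : activeV G u
  · have humem : u ∈ Zs G (τidx u) := mem_Zs_self G hu
    have h2 : (∑ v : Fin (M n), if u = KBτ G v then (if activeV G v then 1 - y (τidx v) else 0) else 0)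
        = 1 - y (τidx u) := by
      rw [Finset.sum_eq_single ((ζ G (τidx u)).symm u)]
      · have hv0 : (ζ G (τidx u)).symm u ∈ Zs G (τidx u) := ζ_symm_mem G humem
        obtain ⟨hv0a, hv0τ⟩ := (mem_Zs G).1 hv0
        have : KBτ G ((ζ G (τidx u)).symm u) = u := by
          rw [KBτ, if_pos hv0a, hv0τ, Equiv.apply_symm_apply]
        rw [if_pos this.symm, if_pos hv0a, hv0τ]
      · intro b _ hb
        rw [if_neg]
        intro hc
        by_cases hba : activeV G b
        · have hmemb : KBτ G b ∈ Zs G (τidx b) := active_KBτ G hba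
          rw [← hc] at hmemb
          have hτb : τidx u = τidx b := ((mem_Zs G).1 hmemb).2
          have hKBb : KBτ G b = ζ G (τidx u) b := by rw [KBτ, if_pos hba, hτb]
          rw [hKBb] at hc
          exact hb ((Equiv.eq_symm_apply _).2 hc.symm)
        · rw [KBτ, if_neg hba] at hc
          exact hba (by rw [← hc]; exact hu)
      · intro h; exact absurd (Finset.mem_univ _) h
    rw [h2, if_pos hu]; ring_nf
  · have h2 : (∑ v : Fin (M n), if u = KBτ G v then (if activeV G v then 1 - y (τidx v) else 0) else 0) = 0 := by
      apply Finset.sum_eq_zero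
      intro v _
      by_cases hva : activeV G v
      · rw [if_pos hva] at *
        by_cases hc : u = KBτ G v
        · exfalso
          have : KBτ G v ∈ Zs G (τidx v) := active_KBτ G hva
          rw [← hc] at this
          exact hu ((mem_Zs G).1 this).1
        · rw [if_neg hc]
      · simp [hva]
    rw [h2, if_neg hu]; ring_nf

end

noncomputable section

lemma Φ_eq_zero_off' {y : Fin (n + 2) → ℝ} (P : ℕ) {t : Tup n P} (h : ¬ tailOK P t) :
    Φ G P y t = 0 := by
  rw [Φ_apply, if_neg h]

lemma edge_card_two {v : Fin (M n)} (he : isEdge G v) : 2 ≤ (Zs G (vj v)).card := by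
  have hv : v ∈ Zs G (vj v) := (mem_Zs G).2 ⟨active_of_edge G he, τidx_of_edge G he⟩
  have heq : eqV (vj v) ∈ Zs G (vj v) := eqV_mem_Zs G (vj v)
  have hne : v ≠ eqV (vj v) := by
    intro h
    have : vi v = vj v := by conv_lhs => rw [h, vi_eqV]
    exact (vj_ne_vi v) this.symm
  calc 2 = ({v, eqV (vj v)} : Finset (Fin (M n))).card := (Finset.card_pair hne).symm
    _ ≤ (Zs G (vj v)).card := Finset.card_le_card (by
        intro x hx
        simp only [Finset.mem_insert, Finset.mem_singleton] at hx
        rcases hx with rfl | rfl <;> assumption)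

lemma ζ_ne_edge {v : Fin (M n)} (he : isEdge G v) : ζ G (vj v) v ≠ v :=
  ζ_ne G ((mem_Zs G).2 ⟨active_of_edge G he, τidx_of_edge G he⟩) (edge_card_two G he)

lemma KA_ne_KB (v : Fin (M n)) : KA G v ≠ KB G v := by
  intro h
  exact (ρ_ne v) (congrArg Prod.fst h).symm

lemma KA_ne_KC (v : Fin (M n)) : KA G v ≠ KC v := by
  intro h
  exact (ρ_ne v) (congrArg Prod.fst h).symm

lemma KB_ne_KC_edge {v : Fin (M n)} (he : isEdge G v) : KB G v ≠ KC v := by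
  intro h
  have h2 := congrArg Prod.snd h
  have hKB : KBτ G v = ζ G (vj v) v := by
    rw [KBτ, if_pos (active_of_edge G he), τidx_of_edge G he]
  rw [show (KB G v).2 = KBτ G v from rfl, show (KC v).2 = v from rfl, hKB] at h2
  exact ζ_ne_edge G he h2

lemma labR_mem01 {y : Fin (n + 2) → ℝ} (hy : y ∈ SSP G) (v w u : Fin (M n)) :
    labR G v w u y = 0 ∨ labR G v w u y = 1 := by
  obtain ⟨hy01, hyadj⟩ := hy
  rw [labR]
  by_cases hA : (w, u) = KA G v
  · have hB : (w, u) ≠ KB G v := by rw [hA]; exact KA_ne_KB G v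
    have hC : (w, u) ≠ KC v := by rw [hA]; exact KA_ne_KC G v
    rw [if_pos hA, if_neg hB, if_neg hC]
    rcases hy01 (vi v) with h | h <;> rw [h] <;> norm_num
  · rw [if_neg hA]
    by_cases hB : (w, u) = KB G v
    · rw [if_pos hB]
      by_cases he : isEdge G v
      · have hC : (w, u) ≠ KC v := by rw [hB]; exact KB_ne_KC_edge G he
        rw [if_neg hC, if_pos he]
        rcases hy01 (vi v) with h1 | h1 <;> rcases hy01 (vj v) with h2 | h2 <;>
          rw [h1, h2] <;> norm_num
        have := hyadj (vi v) (vj v) he.2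
        rw [h1, h2] at this; norm_num at this
      · rw [if_neg he]
        simp only [ite_self]
        rcases hy01 (vi v) with h | h <;> rw [h] <;> norm_num
    · rw [if_neg hB]
      by_cases hC : (w, u) = KC v
      · rw [if_pos hC]
        by_cases he : isEdge G v
        · rw [if_pos he]
          rcases hy01 (vj v) with h | h <;> rw [h] <;> norm_num
        · rw [if_neg he]; norm_num
      · rw [if_neg hC]; norm_num

variable (P : ℕ)

lemma Φ_mem01 {y : Fin (n + 2) → ℝ} (hy : y ∈ SSP G) (t : Tup n P) :
    Φ G P y t = 0 ∨ Φ G P y t = 1 := by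
  rw [Φ_apply]
  by_cases ht : tailOK P t
  · rw [if_pos ht]; exact labR_mem01 G hy _ _ _
  · rw [if_neg ht]; left; rfl

lemma Φ_marginal (y : Fin (n + 2) → ℝ) (r : Fin (P + 3)) (w0 : Fin (M n)) :
    ∑ t ∈ Finset.univ.filter (fun t : Tup n P => t r = w0), Φ G P y t = 1 := by
  classical
  by_cases hr1 : r = i1 P
  · subst hr1
    have hsub : Finset.univ.filter (fun t : Tup n P => t (i1 P) = w0 ∧ tailOK P t) ⊆
        Finset.univ.filter (fun t : Tup n P => t (i1 P) = w0) := by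
      intro t ht
      simp only [Finset.mem_filter, Finset.mem_univ, true_and] at ht ⊢
      exact ht.1
    rw [← Finset.sum_subset hsub (by
      intro t ht hts
      simp only [Finset.mem_filter, Finset.mem_univ, true_and] at ht hts
      push_neg at hts
      exact Φ_eq_zero_off' G P (hts ht) )]
    have hb := Finset.sum_nbij'
      (s := Finset.univ.filter (fun t : Tup n P => t (i1 P) = w0 ∧ tailOK P t))
      (t := (Finset.univ : Finset (Fin (M n) × Fin (M n))))
      (f := fun t => Φ G P y t)
      (g := fun q : Fin (M n) × Fin (M n) => labR G q.1 w0 q.2 y)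
      (i := fun t : Tup n P => ((t (i0 P), t (i2 P)) : Fin (M n) × Fin (M n)))
      (j := fun q : Fin (M n) × Fin (M n) => tup P q.1 w0 q.2)
      (fun a _ => Finset.mem_univ _)
      (fun q _ => by
        simp only [Finset.mem_filter, Finset.mem_univ, true_and]
        exact ⟨tup_i1 P _ _ _, tailOK_tup P _ _ _⟩)
      (fun t ht => by
        simp only [Finset.mem_filter, Finset.mem_univ, true_and] at ht
        show tup P (t (i0 P)) w0 (t (i2 P)) = t
        rw [← ht.1]; exact (eq_tup_of_tailOK P ht.2).symm)
      (fun q _ => by simp)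
      (fun t ht => by
        simp only [Finset.mem_filter, Finset.mem_univ, true_and] at ht
        show Φ G P y t = labR G (t (i0 P)) w0 (t (i2 P)) y
        rw [Φ_apply, if_pos ht.2, ht.1])
    rw [hb]
    rw [Fintype.sum_prod_type]
    exact sum_col_σ G w0 y
  by_cases hr2 : r = i2 P
  · subst hr2
    have hsub : Finset.univ.filter (fun t : Tup n P => t (i2 P) = w0 ∧ tailOK P t) ⊆
        Finset.univ.filter (fun t : Tup n P => t (i2 P) = w0) := by
      intro t ht
      simp only [Finset.mem_filter, Finset.mem_univ, true_and] at ht ⊢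
      exact ht.1
    rw [← Finset.sum_subset hsub (by
      intro t ht hts
      simp only [Finset.mem_filter, Finset.mem_univ, true_and] at ht hts
      push_neg at hts
      exact Φ_eq_zero_off' G P (hts ht) )]
    have hb := Finset.sum_nbij'
      (s := Finset.univ.filter (fun t : Tup n P => t (i2 P) = w0 ∧ tailOK P t))
      (t := (Finset.univ : Finset (Fin (M n) × Fin (M n))))
      (f := fun t => Φ G P y t)
      (g := fun q : Fin (M n) × Fin (M n) => labR G q.1 q.2 w0 y)
      (i := fun t : Tup n P => ((t (i0 P), t (i1 P)) : Fin (M n) × Fin (M n)))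
      (j := fun q : Fin (M n) × Fin (M n) => tup P q.1 q.2 w0)
      (fun a _ => Finset.mem_univ _)
      (fun q _ => by
        simp only [Finset.mem_filter, Finset.mem_univ, true_and]
        exact ⟨tup_i2 P _ _ _, tailOK_tup P _ _ _⟩)
      (fun t ht => by
        simp only [Finset.mem_filter, Finset.mem_univ, true_and] at ht
        show tup P (t (i0 P)) (t (i1 P)) w0 = t
        rw [← ht.1]; exact (eq_tup_of_tailOK P ht.2).symm)
      (fun q _ => by simp)
      (fun t ht => by
        simp only [Finset.mem_filter, Finset.mem_univ, true_and] at ht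
        show Φ G P y t = labR G (t (i0 P)) (t (i1 P)) w0 y
        rw [Φ_apply, if_pos ht.2, ht.1])
    rw [hb]
    rw [Fintype.sum_prod_type]
    exact sum_col_τ G w0 y
  · have hr0 : ∀ t : Tup n P, tailOK P t → t r = w0 → t (i0 P) = w0 := by
      intro t ht hr
      rw [← ht r hr1 hr2, hr]
    have hsub : Finset.univ.filter (fun t : Tup n P => t r = w0 ∧ tailOK P t) ⊆
        Finset.univ.filter (fun t : Tup n P => t r = w0) := by
      intro t ht
      simp only [Finset.mem_filter, Finset.mem_univ, true_and] at ht ⊢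
      exact ht.1
    rw [← Finset.sum_subset hsub (by
      intro t ht hts
      simp only [Finset.mem_filter, Finset.mem_univ, true_and] at ht hts
      push_neg at hts
      exact Φ_eq_zero_off' G P (hts ht) )]
    have hb := Finset.sum_nbij'
      (s := Finset.univ.filter (fun t : Tup n P => t r = w0 ∧ tailOK P t))
      (t := (Finset.univ : Finset (Fin (M n) × Fin (M n))))
      (f := fun t => Φ G P y t)
      (g := fun q : Fin (M n) × Fin (M n) => labR G w0 q.1 q.2 y)
      (i := fun t : Tup n P => ((t (i1 P), t (i2 P)) : Fin (M n) × Fin (M n)))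
      (j := fun q : Fin (M n) × Fin (M n) => tup P w0 q.1 q.2)
      (fun a _ => Finset.mem_univ _)
      (fun q _ => by
        simp only [Finset.mem_filter, Finset.mem_univ, true_and]
        refine ⟨?_, tailOK_tup P _ _ _⟩
        have h3 : tup P w0 q.1 q.2 r = tup P w0 q.1 q.2 (i0 P) := tailOK_tup P _ _ _ r hr1 hr2
        rw [h3, tup_i0])
      (fun t ht => by
        simp only [Finset.mem_filter, Finset.mem_univ, true_and] at ht
        show tup P w0 (t (i1 P)) (t (i2 P)) = t
        rw [← hr0 t ht.2 ht.1]; exact (eq_tup_of_tailOK P ht.2).symm)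
      (fun q _ => by simp)
      (fun t ht => by
        simp only [Finset.mem_filter, Finset.mem_univ, true_and] at ht
        show Φ G P y t = labR G w0 (t (i1 P)) (t (i2 P)) y
        rw [Φ_apply, if_pos ht.2, hr0 t ht.2 ht.1])
    rw [hb]
    rw [Fintype.sum_prod_type]
    exact sum_row G w0 y

/-- H1 : the image of a stable-set vertex is a PAP vertex -/
lemma Φ_mem_PAP {y : Fin (n + 2) → ℝ} (hy : y ∈ SSP G) :
    Φ G P y ∈ PAP (P + 3) (M n) :=
  ⟨Φ_mem01 G P hy, fun r v => Φ_marginal G P y r v⟩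

end

noncomputable section

lemma key_fst {v : Fin (M n)} {k : Fin (M n) × Fin (M n)} (hk : k ∈ keyF G v) :
    k.1 = v ∨ k.1 = ρ v := by
  rw [keyF] at hk
  by_cases he : isEdge G v
  · rw [if_pos he] at hk
    simp only [Finset.mem_insert, Finset.mem_singleton] at hk
    rcases hk with rfl | rfl | rfl
    · exact Or.inl rfl
    · exact Or.inr rfl
    · exact Or.inr rfl
  · rw [if_neg he] at hk
    simp only [Finset.mem_insert, Finset.mem_singleton] at hk
    rcases hk with rfl | rfl
    · exact Or.inl rfl
    · exact Or.inr rfl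

lemma key_snd {v : Fin (M n)} {k : Fin (M n) × Fin (M n)} (hk : k ∈ keyF G v) :
    k.2 = v ∨ k.2 = ζ G (τidx v) v := by
  rw [keyF] at hk
  by_cases he : isEdge G v
  · rw [if_pos he] at hk
    simp only [Finset.mem_insert, Finset.mem_singleton] at hk
    rcases hk with rfl | rfl | rfl
    · right
      show KAτ G v = _
      rw [KAτ, if_pos he, τidx_of_edge G he]
    · right
      show KBτ G v = _
      rw [KBτ, if_pos (active_of_edge G he)]
    · exact Or.inl rfl
  · rw [if_neg he] at hk
    simp only [Finset.mem_insert, Finset.mem_singleton] at hk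
    rcases hk with rfl | rfl
    · left
      show KAτ G v = v
      rw [KAτ, if_neg he]
    · by_cases ha : activeV G v
      · right; show KBτ G v = _; rw [KBτ, if_pos ha]
      · left; show KBτ G v = v; rw [KBτ, if_neg ha]

variable (P : ℕ)

/-- H2: a 0/1 PAP point supported on the design comes from a stable set. -/
lemma H2 {x : Tup n P → ℝ} (hx : x ∈ PAP (P + 3) (M n))
    (hsupp : ∀ t : Tup n P, t ∉ Dset G P → x t = 0) :
    ∃ y ∈ SSP G, Φ G P y = x := by
  classical
  obtain ⟨hx01, hxsum⟩ := hx
  have fiber : ∀ (r : Fin (P + 3)) (v : Fin (M n)),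
      ∃ a : Tup n P, a r = v ∧ x a = 1 ∧ ∀ b : Tup n P, b r = v → b ≠ a → x b = 0 := by
    intro r v
    obtain ⟨a, ha, h1, h2⟩ := exists_one _ x (fun t _ => hx01 t) (hxsum r v)
    simp only [Finset.mem_filter, Finset.mem_univ, true_and] at ha
    exact ⟨a, ha, h1, fun b hb hba => h2 b (by simp [hb]) hba⟩
  choose T hT0 hT1 hTu using fun v => fiber (i0 P) v
  have hTD : ∀ v, T v ∈ Dset G P := by
    intro v; by_contra h
    have := hsupp _ h; rw [hT1 v] at this; norm_num at this
  have hTtail : ∀ v, tailOK P (T v) := by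
    intro v
    have h := hTD v
    simp only [Dset, Finset.mem_filter, Finset.mem_univ, true_and] at h
    exact h.1
  set σf : Fin (M n) → Fin (M n) := fun v => T v (i1 P) with hσf
  set τf : Fin (M n) → Fin (M n) := fun v => T v (i2 P) with hτf
  have hkeyT : ∀ v, (σf v, τf v) ∈ keyF G v := by
    intro v
    have h := hTD v
    simp only [Dset, Finset.mem_filter, Finset.mem_univ, true_and] at h
    rw [hT0 v] at h
    exact h.2
  have hTtup : ∀ v, T v = tup P v (σf v) (τf v) := by
    intro v
    have h := eq_tup_of_tailOK P (hTtail v)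
    rw [hT0 v] at h
    exact h
  have hσinj : Function.Injective σf := by
    intro v v' h
    obtain ⟨a, har, ha1, hau⟩ := fiber (i1 P) (σf v)
    have e1 : T v = a := by
      by_contra hne
      have := hau (T v) rfl hne
      rw [hT1 v] at this; norm_num at this
    have e2 : T v' = a := by
      by_contra hne
      have := hau (T v') h.symm hne
      rw [hT1 v'] at this; norm_num at this
    have hTT : T v = T v' := e1.trans e2.symm
    calc v = T v (i0 P) := (hT0 v).symm
      _ = T v' (i0 P) := by rw [hTT]
      _ = v' := hT0 v'
  have hτinj : Function.Injective τf := by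
    intro v v' h
    obtain ⟨a, har, ha1, hau⟩ := fiber (i2 P) (τf v)
    have e1 : T v = a := by
      by_contra hne
      have := hau (T v) rfl hne
      rw [hT1 v] at this; norm_num at this
    have e2 : T v' = a := by
      by_contra hne
      have := hau (T v') h.symm hne
      rw [hT1 v'] at this; norm_num at this
    have hTT : T v = T v' := e1.trans e2.symm
    calc v = T v (i0 P) := (hT0 v).symm
      _ = T v' (i0 P) := by rw [hTT]
      _ = v' := hT0 v'
  have hσ_or : ∀ v, σf v = v ∨ σf v = ρ v := fun v => key_fst G (hkeyT v)
  have hτ_or : ∀ v, τf v = v ∨ τf v = ζ G (τidx v) v := fun v => key_snd G (hkeyT v)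
  have hσdich := forceσ σf hσinj hσ_or
  have hτdich : ∀ j, (∀ v ∈ Zs G j, τf v = v) ∨ (∀ v ∈ Zs G j, τf v = ζ G j v) := by
    intro j
    refine forceτ G τf hτinj j ?_
    intro v hv
    have hj : τidx v = j := ((mem_Zs G).1 hv).2
    rw [← hj]
    exact hτ_or v
  set cP : Fin (n + 2) → Prop := fun i => ∀ v, vi v = i → σf v = v with hcP
  set dP : Fin (n + 2) → Prop := fun j => ∀ v ∈ Zs G j, τf v = v with hdP
  have hσ_neg : ∀ v, ¬ cP (vi v) → σf v = ρ v := by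
    intro v h
    rcases hσdich (vi v) with hc | hc
    · exact absurd hc h
    · exact hc v rfl
  have hcP_of : ∀ v, σf v = v → cP (vi v) := by
    intro v h
    rcases hσdich (vi v) with hc | hc
    · exact hc
    · exact absurd (h.symm.trans (hc v rfl)).symm (ρ_ne v)
  have hτ_neg : ∀ j, ¬ dP j → ∀ v ∈ Zs G j, τf v = ζ G j v := by
    intro j h
    rcases hτdich j with hd | hd
    · exact absurd hd h
    · exact hd
  have hKA_of_σ : ∀ v, σf v = v → (σf v, τf v) = KA G v := by
    intro v hs
    have hk := hkeyT v
    rw [keyF] at hk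
    by_cases he : isEdge G v
    · rw [if_pos he] at hk
      simp only [Finset.mem_insert, Finset.mem_singleton] at hk
      rcases hk with h | h | h
      · exact h
      · exact absurd (hs.symm.trans (show σf v = ρ v from congrArg Prod.fst h)).symm (ρ_ne v)
      · exact absurd (hs.symm.trans (show σf v = ρ v from congrArg Prod.fst h)).symm (ρ_ne v)
    · rw [if_neg he] at hk
      simp only [Finset.mem_insert, Finset.mem_singleton] at hk
      rcases hk with h | h
      · exact h
      · exact absurd (hs.symm.trans (show σf v = ρ v from congrArg Prod.fst h)).symm (ρ_ne v)
  have hKB_of_σ : ∀ v, ¬ isEdge G v → σf v = ρ v → (σf v, τf v) = KB G v := by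
    intro v he hs
    have hk := hkeyT v
    rw [keyF, if_neg he] at hk
    simp only [Finset.mem_insert, Finset.mem_singleton] at hk
    rcases hk with h | h
    · exact absurd ((show σf v = v from congrArg Prod.fst h).symm.trans hs).symm (ρ_ne v)
    · exact h
  have bridge : ∀ j, 2 ≤ (Zs G j).card → (cP j ↔ dP j) := by
    intro j hcard
    have hme := eqV_mem_Zs G j
    have hζne := ζ_ne G hme hcard
    have hne := not_edge_eqV G j
    have hKAτ : KAτ G (eqV j) = eqV j := by rw [KAτ, if_neg hne]
    have hKBτ : KBτ G (eqV j) = ζ G j (eqV j) := by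
      rw [KBτ, if_pos (active_eqV G j), τidx_eqV]
    constructor
    · intro hcj
      have hσ : σf (eqV j) = eqV j := hcj _ (vi_eqV j)
      have hKA := hKA_of_σ _ hσ
      have hτv : τf (eqV j) = eqV j := by
        have h2 : τf (eqV j) = KAτ G (eqV j) := congrArg Prod.snd hKA
        rw [h2, hKAτ]
      rcases hτdich j with hd | hd
      · exact hd
      · exact absurd ((hd _ hme).symm.trans hτv) hζne
    · intro hdj
      have hτv : τf (eqV j) = eqV j := hdj _ hme
      have hk := hkeyT (eqV j)
      rw [keyF, if_neg hne] at hk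
      simp only [Finset.mem_insert, Finset.mem_singleton] at hk
      have hKA : (σf (eqV j), τf (eqV j)) = KA G (eqV j) := by
        rcases hk with h | h
        · exact h
        · exfalso
          have h2 : τf (eqV j) = KBτ G (eqV j) := congrArg Prod.snd h
          rw [hKBτ] at h2
          exact hζne (h2.symm.trans hτv)
      have hσv : σf (eqV j) = eqV j := congrArg Prod.fst hKA
      have := hcP_of _ hσv
      rwa [vi_eqV] at this
  have hstab : ∀ a b, G.Adj a b → ¬ (cP a ∧ cP b) := by
    rintro a b hadj ⟨hca, hcb⟩
    obtain ⟨j', hj'⟩ := Fin.exists_succAbove_eq hadj.ne'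
    set vE : Fin (M n) := mkV a ((q2 n).symm (j', 0)) with hvE
    have hvi : vi vE = a := by rw [hvE]; simp
    have hvε : vε vE = 0 := by rw [hvE]; simp [vε]
    have hvj'2 : vj' vE = j' := by rw [hvE]; simp [vj']
    have hvj : vj vE = b := by rw [vj, hvi, hvj'2, hj']
    have hE : isEdge G vE := ⟨hvε, by rw [hvi, hvj]; exact hadj⟩
    have hσv : σf vE = vE := hca vE hvi
    have hmem : vE ∈ Zs G b :=
      (mem_Zs G).2 ⟨active_of_edge G hE, by rw [τidx_of_edge G hE, hvj]⟩
    have hcard : 2 ≤ (Zs G b).card := by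
      have := edge_card_two G hE; rwa [hvj] at this
    have hdb : dP b := (bridge b hcard).1 hcb
    have hτv : τf vE = vE := hdb vE hmem
    have hKA := hKA_of_σ _ hσv
    have h2 : τf vE = KAτ G vE := congrArg Prod.snd hKA
    rw [hτv, KAτ, if_pos hE] at h2
    exact (ζ_ne_edge G hE) h2.symm
  set y : Fin (n + 2) → ℝ := fun i => if cP i then (1 : ℝ) else 0 with hy
  have hySSP : y ∈ SSP G := by
    constructor
    · intro i
      by_cases h : cP i
      · right; simp only [hy]; rw [if_pos h]
      · left; simp only [hy]; rw [if_neg h]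
    · intro a b hadj
      have hs := hstab a b hadj
      by_cases ha : cP a
      · by_cases hb : cP b
        · exact absurd ⟨ha, hb⟩ hs
        · simp only [hy]; rw [if_pos ha, if_neg hb]; norm_num
      · by_cases hb : cP b
        · simp only [hy]; rw [if_neg ha, if_pos hb]; norm_num
        · simp only [hy]; rw [if_neg ha, if_neg hb]; norm_num
  refine ⟨y, hySSP, ?_⟩
  funext t
  by_cases htD : t ∈ Dset G P
  · simp only [Dset, Finset.mem_filter, Finset.mem_univ, true_and] at htD
    obtain ⟨htail, hkey_t⟩ := htD
    set v := t (i0 P) with hv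
    have hteq : t = T v ↔ (t (i1 P) = σf v ∧ t (i2 P) = τf v) := by
      constructor
      · intro h; rw [h]; exact ⟨rfl, rfl⟩
      · rintro ⟨h1, h2⟩
        rw [eq_tup_of_tailOK P htail, ← hv, h1, h2, ← hTtup v]
    have hxt : x t = if (t (i1 P) = σf v ∧ t (i2 P) = τf v) then 1 else 0 := by
      by_cases h : t = T v
      · rw [if_pos (hteq.1 h), h, hT1 v]
      · rw [if_neg (fun hh => h (hteq.2 hh))]
        exact hTu v t hv.symm h
    rw [Φ_apply, if_pos htail, hxt, ← hv]
    have hyvi0 : ¬ cP (vi v) → y (vi v) = 0 := fun h => by simp only [hy]; rw [if_neg h]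
    have hyvi1 : cP (vi v) → y (vi v) = 1 := fun h => by simp only [hy]; rw [if_pos h]
    rw [keyF] at hkey_t
    by_cases he : isEdge G v
    · -- edge case
      have hmemv : v ∈ Zs G (vj v) :=
        (mem_Zs G).2 ⟨active_of_edge G he, τidx_of_edge G he⟩
      have hcard := edge_card_two G he
      have hbr := bridge (vj v) hcard
      have hζv := ζ_ne_edge G he
      have hKAτ : KAτ G v = ζ G (vj v) v := by rw [KAτ, if_pos he]
      have hKBτ : KBτ G v = ζ G (vj v) v := by
        rw [KBτ, if_pos (active_of_edge G he), τidx_of_edge G he]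
      have hyvj0 : ¬ cP (vj v) → y (vj v) = 0 := fun h => by simp only [hy]; rw [if_neg h]
      have hyvj1 : cP (vj v) → y (vj v) = 1 := fun h => by simp only [hy]; rw [if_pos h]
      have hτpos : dP (vj v) → τf v = v := fun hd => hd v hmemv
      have hτneg : ¬ dP (vj v) → τf v = ζ G (vj v) v := fun hd => hτ_neg _ hd v hmemv
      rw [if_pos he] at hkey_t
      simp only [Finset.mem_insert, Finset.mem_singleton] at hkey_t
      have hstv := hstab (vi v) (vj v) he.2
      rcases hkey_t with hk | hk | hk
      · -- KA : (v, ζ (vj v) v), label y (vi v)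
        have h1 : t (i1 P) = v := congrArg Prod.fst hk
        have h2 : t (i2 P) = ζ G (vj v) v := by
          have h2' : t (i2 P) = KAτ G v := congrArg Prod.snd hk
          rwa [hKAτ] at h2'
        have hlab : labR G v (t (i1 P)) (t (i2 P)) y = y (vi v) := by
          rw [labR, if_pos hk,
            if_neg (fun hh : _ = KB G v => KA_ne_KB G v (hk.symm.trans hh)),
            if_neg (fun hh : _ = KC v => KA_ne_KC G v (hk.symm.trans hh))]
          ring
        rw [hlab]
        by_cases ca : cP (vi v)
        · have hσv : σf v = v := ca v rfl
          have hKA := hKA_of_σ v hσv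
          have hτv : τf v = ζ G (vj v) v := by
            have h2' : τf v = KAτ G v := congrArg Prod.snd hKA
            rwa [hKAτ] at h2'
          rw [if_pos ⟨h1.trans hσv.symm, h2.trans hτv.symm⟩, hyvi1 ca]
        · have hσv : σf v = ρ v := hσ_neg v ca
          rw [if_neg (fun hh : _ ∧ _ => (ρ_ne v) (by rw [← hσv, ← hh.1]; exact h1)), hyvi0 ca]
      · -- KB : (ρ v, ζ (vj v) v), label 1 - y vi - y vj
        have h1 : t (i1 P) = ρ v := congrArg Prod.fst hk
        have h2 : t (i2 P) = ζ G (vj v) v := by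
          have h2' : t (i2 P) = KBτ G v := congrArg Prod.snd hk
          rwa [hKBτ] at h2'
        have hlab : labR G v (t (i1 P)) (t (i2 P)) y = 1 - y (vi v) - y (vj v) := by
          rw [labR, if_pos hk, if_pos he,
            if_neg (fun hh : _ = KA G v => KA_ne_KB G v (hh.symm.trans hk)),
            if_neg (fun hh : _ = KC v => KB_ne_KC_edge G he (hk.symm.trans hh))]
          ring
        rw [hlab]
        by_cases ca : cP (vi v)
        · have hσv : σf v = v := ca v rfl
          have hcb : ¬ cP (vj v) := fun hb => hstv ⟨ca, hb⟩
          rw [if_neg (fun hh : _ ∧ _ => (ρ_ne v) (by rw [← h1, hh.1]; exact hσv)), hyvi1 ca, hyvj0 hcb]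
          ring
        · have hσv : σf v = ρ v := hσ_neg v ca
          by_cases db : dP (vj v)
          · have hτv : τf v = v := hτpos db
            rw [if_neg (fun hh : _ ∧ _ => hζv (by rw [← h2, hh.2]; exact hτv)),
              hyvi0 ca, hyvj1 (hbr.2 db)]
            ring
          · have hτv : τf v = ζ G (vj v) v := hτneg db
            rw [if_pos ⟨h1.trans hσv.symm, h2.trans hτv.symm⟩, hyvi0 ca,
              hyvj0 (fun hb => db (hbr.1 hb))]
            ring
      · -- KC : (ρ v, v), label y (vj v)
        have h1 : t (i1 P) = ρ v := congrArg Prod.fst hk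
        have h2 : t (i2 P) = v := congrArg Prod.snd hk
        have hlab : labR G v (t (i1 P)) (t (i2 P)) y = y (vj v) := by
          rw [labR, if_pos hk, if_pos he,
            if_neg (fun hh : _ = KA G v => KA_ne_KC G v (hh.symm.trans hk)),
            if_neg (fun hh : _ = KB G v => KB_ne_KC_edge G he (hh.symm.trans hk))]
          ring
        rw [hlab]
        by_cases ca : cP (vi v)
        · have hσv : σf v = v := ca v rfl
          have hcb : ¬ cP (vj v) := fun hb => hstv ⟨ca, hb⟩
          rw [if_neg (fun hh : _ ∧ _ => (ρ_ne v) (by rw [← h1, hh.1]; exact hσv)), hyvj0 hcb]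
        · have hσv : σf v = ρ v := hσ_neg v ca
          by_cases db : dP (vj v)
          · have hτv : τf v = v := hτpos db
            rw [if_pos ⟨h1.trans hσv.symm, h2.trans hτv.symm⟩, hyvj1 (hbr.2 db)]
          · have hτv : τf v = ζ G (vj v) v := hτneg db
            rw [if_neg (fun hh : _ ∧ _ => hζv ((h2.symm.trans hh.2).trans hτv).symm), hyvj0 (fun hb => db (hbr.1 hb))]
    · -- non-edge case
      have hKAτ : KAτ G v = v := by rw [KAτ, if_neg he]
      rw [if_neg he] at hkey_t
      simp only [Finset.mem_insert, Finset.mem_singleton] at hkey_t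
      rcases hkey_t with hk | hk
      · -- KA : (v, v)
        have h1 : t (i1 P) = v := congrArg Prod.fst hk
        have hlab : labR G v (t (i1 P)) (t (i2 P)) y = y (vi v) := by
          rw [labR, if_pos hk,
            if_neg (fun hh : _ = KB G v => KA_ne_KB G v (hk.symm.trans hh)),
            if_neg (fun hh : _ = KC v => KA_ne_KC G v (hk.symm.trans hh))]
          ring
        rw [hlab]
        by_cases ca : cP (vi v)
        · have hσv : σf v = v := ca v rfl
          have hKA := hKA_of_σ v hσv
          have hτv : τf v = v := by
            have h2' : τf v = KAτ G v := congrArg Prod.snd hKA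
            rwa [hKAτ] at h2'
          have h2 : t (i2 P) = v := by
            have h2' : t (i2 P) = KAτ G v := congrArg Prod.snd hk
            rwa [hKAτ] at h2'
          rw [if_pos ⟨h1.trans hσv.symm, h2.trans hτv.symm⟩, hyvi1 ca]
        · have hσv : σf v = ρ v := hσ_neg v ca
          rw [if_neg (fun hh : _ ∧ _ => (ρ_ne v) (by rw [← hσv, ← hh.1]; exact h1)), hyvi0 ca]
      · -- KB : (ρ v, KBτ v)
        have h1 : t (i1 P) = ρ v := congrArg Prod.fst hk
        have h2 : t (i2 P) = KBτ G v := congrArg Prod.snd hk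
        have hlab : labR G v (t (i1 P)) (t (i2 P)) y = 1 - y (vi v) := by
          rw [labR, if_pos hk,
            if_neg (fun hh : _ = KA G v => KA_ne_KB G v (hh.symm.trans hk)), if_neg he]
          simp only [ite_self]
          ring
        rw [hlab]
        by_cases ca : cP (vi v)
        · have hσv : σf v = v := ca v rfl
          rw [if_neg (fun hh : _ ∧ _ => (ρ_ne v) (by rw [← h1, hh.1]; exact hσv)), hyvi1 ca]
          ring
        · have hσv : σf v = ρ v := hσ_neg v ca
          have hKB := hKB_of_σ v he hσv
          have hτv : τf v = KBτ G v := congrArg Prod.snd hKB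
          rw [if_pos ⟨h1.trans hσv.symm, h2.trans hτv.symm⟩, hyvi0 ca]
          ring
  · rw [Φ_eq_zero_off G P htD, hsupp t htD]

end

noncomputable section

variable (P : ℕ)

lemma labR_eqV (i : Fin (n + 2)) (y : Fin (n + 2) → ℝ) :
    labR G (eqV i) (eqV i) (eqV i) y = y i := by
  have hne := not_edge_eqV G i
  have hKA : KA G (eqV i) = (eqV i, eqV i) := by rw [KA, KAτ, if_neg hne]
  rw [labR, if_pos hKA.symm,
    if_neg (fun hh : _ = KB G (eqV i) =>
      (ρ_ne (eqV i)) (show eqV i = ρ (eqV i) from congrArg Prod.fst hh).symm),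
    if_neg (fun hh : _ = KC (eqV i) =>
      (ρ_ne (eqV i)) (show eqV i = ρ (eqV i) from congrArg Prod.fst hh).symm),
    vi_eqV]
  ring

lemma Φ_inj : Function.Injective (Φ G P) := by
  intro y1 y2 h
  funext i
  have hv := congrFun h (tup P (eqV i) (eqV i) (eqV i))
  rw [Φ_tup, Φ_tup, labR_eqV, labR_eqV] at hv
  exact hv

/-- image of the vertex set -/
lemma himg :
    ⇑(Φ G P) '' SSP G = PAP (P + 3) (M n) ∩ {x : Tup n P → ℝ | ∀ t ∉ Dset G P, x t = 0} := by
  ext x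
  constructor
  · rintro ⟨y, hy, rfl⟩
    exact ⟨Φ_mem_PAP G P hy, fun t ht => Φ_eq_zero_off G P ht⟩
  · rintro ⟨hx, hz⟩
    obtain ⟨y, hy, he⟩ := H2 G P hx hz
    exact ⟨y, hy, he⟩

lemma hull_nonneg {x : Tup n P → ℝ} (hx : x ∈ convexHull ℝ (PAP (P + 3) (M n)))
    (t : Tup n P) : 0 ≤ x t := by
  have hconv : Convex ℝ {z : Tup n P → ℝ | 0 ≤ z t} := by
    intro a ha b hb s r hs hr hsr
    have : (s • a + r • b) t = s * a t + r * b t := rfl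
    simp only [Set.mem_setOf_eq] at ha hb ⊢
    rw [this]
    exact add_nonneg (mul_nonneg hs ha) (mul_nonneg hr hb)
  have hsub : PAP (P + 3) (M n) ⊆ {z : Tup n P → ℝ | 0 ≤ z t} := by
    intro z hz
    rcases hz.1 t with h | h
    · exact le_of_eq h.symm
    · rw [Set.mem_setOf_eq, h]; norm_num
  exact convexHull_min hsub hconv hx

lemma hull_inter :
    convexHull ℝ (PAP (P + 3) (M n) ∩ {x : Tup n P → ℝ | ∀ t ∉ Dset G P, x t = 0}) =
      convexHull ℝ (PAP (P + 3) (M n)) ∩ {x : Tup n P → ℝ | ∀ t ∉ Dset G P, x t = 0} := by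
  classical
  set Z : Set (Tup n P → ℝ) := {x : Tup n P → ℝ | ∀ t ∉ Dset G P, x t = 0} with hZ
  have hZconv : Convex ℝ Z := by
    intro a ha b hb s r hs hr hsr
    intro t ht
    have : (s • a + r • b) t = s * a t + r * b t := rfl
    rw [this, ha t ht, hb t ht]
    ring
  apply Set.Subset.antisymm
  · exact convexHull_min
      (fun x hx => ⟨subset_convexHull ℝ _ hx.1, hx.2⟩)
      ((convex_convexHull ℝ _).inter hZconv)
  · rintro x ⟨hxh, hxz⟩
    rw [_root_.convexHull_eq] at hxh
    obtain ⟨ι, s, w, z, hw0, hw1, hzs, hcm⟩ := hxh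
    have hxs : x = ∑ i ∈ s, w i • z i := by
      rw [← hcm, Finset.centerMass_eq_of_sum_1 _ _ hw1]
    have hz0 : ∀ i ∈ s.filter (fun i => w i ≠ 0), z i ∈ PAP (P + 3) (M n) ∩ Z := by
      intro i hi
      rw [Finset.mem_filter] at hi
      refine ⟨hzs i hi.1, ?_⟩
      intro t ht
      have hxt : x t = ∑ j ∈ s, w j * z j t := by
        rw [hxs]
        rw [Finset.sum_apply]
        rfl
      have hsum0 : ∑ j ∈ s, w j * z j t = 0 := by rw [← hxt]; exact hxz t ht
      have hterm : ∀ j ∈ s, 0 ≤ w j * z j t := by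
        intro j hj
        refine mul_nonneg (hw0 j hj) ?_
        rcases (hzs j hj).1 t with h | h
        · exact le_of_eq h.symm
        · rw [h]; norm_num
      have h0 := (Finset.sum_eq_zero_iff_of_nonneg hterm).1 hsum0 i hi.1
      rcases mul_eq_zero.1 h0 with h | h
      · exact absurd h hi.2
      · exact h
    have hx' : x = (s.filter (fun i => w i ≠ 0)).centerMass w z := by
      rw [Finset.centerMass_filter_ne_zero, hcm]
    rw [hx']
    refine Finset.centerMass_mem_convexHull _ (fun i hi => hw0 i (Finset.mem_of_mem_filter i hi)) ?_ hz0
    rw [Finset.sum_filter_ne_zero, hw1]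
    norm_num

lemma zero_mem_SSP : (fun _ : Fin (n + 2) => (0 : ℝ)) ∈ SSP G :=
  ⟨fun _ => Or.inl rfl, fun _ _ _ => by norm_num⟩

theorem main :
    ∃ F : Set ((Fin (P + 3) → Fin (M n)) → ℝ),
      IsExposed ℝ (convexHull ℝ (PAP (P + 3) (M n))) F ∧
      ∃ φ : (Fin (n + 2) → ℝ) →ᵃ[ℝ] ((Fin (P + 3) → Fin (M n)) → ℝ),
        Function.Injective φ ∧ φ '' (convexHull ℝ (SSP G)) = F := by
  classical
  set Z : Set (Tup n P → ℝ) := {x : Tup n P → ℝ | ∀ t ∉ Dset G P, x t = 0} with hZ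
  set A : Set (Tup n P → ℝ) := convexHull ℝ (PAP (P + 3) (M n)) with hA
  have hx₀A : Φ G P (fun _ => 0) ∈ A :=
    subset_convexHull ℝ _ (Φ_mem_PAP G P (zero_mem_SSP G))
  have hx₀Z : Φ G P (fun _ => 0) ∈ Z := fun t ht => Φ_eq_zero_off G P ht
  refine ⟨A ∩ Z, ?_, Φ G P, Φ_inj G P, ?_⟩
  · -- exposedness
    intro _
    set l : ((Fin (P + 3) → Fin (M n)) → ℝ) →L[ℝ] ℝ :=
      ∑ t ∈ Finset.univ.filter (fun t : Tup n P => t ∉ Dset G P),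
        -(ContinuousLinearMap.proj (R := ℝ) (φ := fun _ : Tup n P => ℝ) t) with hldef
    refine ⟨l, ?_⟩
    have hl : ∀ x : Tup n P → ℝ,
        l x = -∑ t ∈ Finset.univ.filter (fun t : Tup n P => t ∉ Dset G P), x t := by
      intro x
      rw [hldef, ContinuousLinearMap.sum_apply, ← Finset.sum_neg_distrib]
      refine Finset.sum_congr rfl (fun t _ => ?_)
      rw [ContinuousLinearMap.neg_apply, ContinuousLinearMap.proj_apply]
    have hlle : ∀ x ∈ A, l x ≤ 0 := by
      intro x hx
      rw [hl]
      simp only [neg_nonpos]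
      exact Finset.sum_nonneg (fun t _ => hull_nonneg P hx t)
    have hlZ : ∀ x ∈ Z, l x = 0 := by
      intro x hx
      rw [hl, neg_eq_zero]
      refine Finset.sum_eq_zero (fun t ht => ?_)
      rw [Finset.mem_filter] at ht
      exact hx t ht.2
    have hlx₀ : l (Φ G P (fun _ => 0)) = 0 := hlZ _ hx₀Z
    ext x
    constructor
    · rintro ⟨hxA, hxZ⟩
      refine ⟨hxA, fun w hw => ?_⟩
      rw [hlZ x hxZ]
      exact hlle w hw
    · rintro ⟨hxA, hmax⟩
      refine ⟨hxA, ?_⟩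
      have h1 : 0 ≤ l x := by
        have := hmax _ hx₀A
        rwa [hlx₀] at this
      have h3 : l x = 0 := le_antisymm (hlle x hxA) h1
      rw [hl, neg_eq_zero] at h3
      intro t ht
      exact (Finset.sum_eq_zero_iff_of_nonneg
        (fun t' _ => hull_nonneg P hxA t')).1 h3 t
        (Finset.mem_filter.2 ⟨Finset.mem_univ _, ht⟩)
  · rw [AffineMap.image_convexHull, himg, hull_inter]

end

end St12

/-- For `p ≥ 3`, `k ≥ 2`, any graph `G` on `k` vertices and `m = 2k(k−1)`,
`conv(SSP(G))` is affinely equivalent to an exposed face of `conv(PAP^p_m)`. -/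
theorem stmt12 (p k : ℕ) (hp : 3 ≤ p) (hk : 2 ≤ k) (G : SimpleGraph (Fin k)) :
    ∀ m : ℕ, m = 2 * k * (k - 1) →
      ∃ F : Set ((Fin p → Fin m) → ℝ),
        IsExposed ℝ (convexHull ℝ (PAP p m)) F ∧
        ∃ φ : (Fin k → ℝ) →ᵃ[ℝ] ((Fin p → Fin m) → ℝ),
          Function.Injective φ ∧ φ '' (convexHull ℝ (SSP G)) = F := by
  intro m hm
  subst hm
  obtain ⟨n, rfl⟩ : ∃ n, k = n + 2 := ⟨k - 2, by omega⟩
  obtain ⟨P, rfl⟩ : ∃ P, p = P + 3 := ⟨p - 3, by omega⟩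
  exact St12.main G P
end

section
/- For every n ≥ 1, the Boolean quadratic polytope conv(BQP_n) is affinely equivalent to an exposed face of the quadratic linear ordering polytope conv(QLOP_m) with m = 2n: there is an exposed face F of conv(QLOP_{2n}) and an injective affine map φ : ℝ^{Δ_n} → ℝ^{d} (d the number of coordinates of QLOP_{2n}) with φ(conv(BQP_n)) = F. -/
/-- Index set `Δ_n = {(i,j) : 1 ≤ i ≤ j ≤ n}` for Boolean quadratic polytopes. -/
def Idx (n : ℕ) : Type := {p : Fin n × Fin n // p.1 ≤ p.2}

/-- The vertex set of the Boolean quadratic polytope. -/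
def BQP (n : ℕ) : Set (Idx n → ℝ) :=
  {x | (∀ p, x p = 0 ∨ x p = 1) ∧
       ∀ (i j : Fin n) (h : i < j),
         x ⟨(i, j), le_of_lt h⟩ = x ⟨(i, i), le_refl i⟩ * x ⟨(j, j), le_refl j⟩}

/-- Index set `{(i,j) : 1 ≤ i < j ≤ m}` for linear ordering polytopes. -/
def PairIdx (m : ℕ) : Type := {q : Fin m × Fin m // q.1 < q.2}

/-- The vertex set of the linear ordering polytope: 0/1 vectors satisfying the
3-dicycle inequalities `0 ≤ y_{ij} + y_{jk} − y_{ik} ≤ 1` for `i < j < k`. -/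
def LOP (m : ℕ) : Set (PairIdx m → ℝ) :=
  {y | (∀ q, y q = 0 ∨ y q = 1) ∧
       ∀ (i j k : Fin m) (hij : i < j) (hjk : j < k),
         0 ≤ y ⟨(i, j), hij⟩ + y ⟨(j, k), hjk⟩ - y ⟨(i, k), hij.trans hjk⟩ ∧
         y ⟨(i, j), hij⟩ + y ⟨(j, k), hjk⟩ - y ⟨(i, k), hij.trans hjk⟩ ≤ 1}

/-- Index set of all lexicographically ordered pairs `(i,j) ≺ (k,l)` of pairs
`i < j`, `k < l`, for the quadratic coordinates `z_{ijkl}`. -/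
def QIdx (m : ℕ) : Type :=
  {r : PairIdx m × PairIdx m //
    r.1.val.1 < r.2.val.1 ∨ (r.1.val.1 = r.2.val.1 ∧ r.1.val.2 < r.2.val.2)}

/-- The vertex set of the quadratic linear ordering polytope: vectors `(y, z)` with
`y ∈ LOP_m` and `z_{ijkl} = y_{ij} · y_{kl}` for all `(i,j) ≺ (k,l)`. -/
def QLOP (m : ℕ) : Set ((PairIdx m → ℝ) × (QIdx m → ℝ)) :=
  {w | w.1 ∈ LOP m ∧ ∀ r : QIdx m, w.2 r = w.1 r.val.1 * w.1 r.val.2}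

-- Auxiliary infrastructure


instance (n : ℕ) : Fintype (Idx n) := inferInstanceAs (Fintype {p : Fin n × Fin n // p.1 ≤ p.2})
instance (m : ℕ) : Fintype (PairIdx m) :=
  inferInstanceAs (Fintype {q : Fin m × Fin m // q.1 < q.2})
instance (m : ℕ) : Fintype (QIdx m) :=
  inferInstanceAs (Fintype {r : PairIdx m × PairIdx m //
    r.1.val.1 < r.2.val.1 ∨ (r.1.val.1 = r.2.val.1 ∧ r.1.val.2 < r.2.val.2)})

def blk {n : ℕ} (a : Fin (2 * n)) : Fin n := ⟨a.val / 2, by have := a.isLt; omega⟩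

def diag {n : ℕ} (i : Fin n) : Idx n := ⟨(i, i), le_refl i⟩

def wpair {n : ℕ} (i : Fin n) : PairIdx (2 * n) :=
  ⟨(⟨2 * i.val, by have := i.isLt; omega⟩, ⟨2 * i.val + 1, by have := i.isLt; omega⟩),
    Fin.mk_lt_mk.mpr (by omega)⟩

def isW {n : ℕ} (q : PairIdx (2 * n)) : Prop := (q.val.1 : ℕ) / 2 = (q.val.2 : ℕ) / 2

instance {n : ℕ} : DecidablePred (isW (n := n)) := fun _ => instDecidableEqNat _ _

lemma QIdx_le {n : ℕ} (r : QIdx (2 * n)) : blk r.val.1.val.1 ≤ blk r.val.2.val.1 := by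
  have h : (r.val.1.val.1 : ℕ) ≤ (r.val.2.val.1 : ℕ) := by
    rcases r.prop with h | ⟨h, _⟩
    · exact le_of_lt (Fin.lt_def.mp h)
    · exact le_of_eq (congrArg Fin.val h)
  exact Fin.mk_le_mk.mpr (by omega)

def specY {n : ℕ} (q : PairIdx (2 * n)) : Option (Idx n) :=
  if isW q then some (diag (blk q.val.1)) else none

def specZ {n : ℕ} (r : QIdx (2 * n)) : Option (Idx n) :=
  if isW r.val.1 then
    if isW r.val.2 then some ⟨(blk r.val.1.val.1, blk r.val.2.val.1), QIdx_le r⟩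
    else some (diag (blk r.val.1.val.1))
  else if isW r.val.2 then some (diag (blk r.val.2.val.1))
  else none

def aval {n : ℕ} (o : Option (Idx n)) (x : Idx n → ℝ) : ℝ := o.elim 1 x
def oval {n : ℕ} (o : Option (Idx n)) (x : Idx n → ℝ) : ℝ := o.elim 0 x

lemma oval_add {n : ℕ} (o : Option (Idx n)) (x y : Idx n → ℝ) :
    oval o (x + y) = oval o x + oval o y := by cases o <;> simp [oval]

lemma oval_smul {n : ℕ} (c : ℝ) (o : Option (Idx n)) (x : Idx n → ℝ) :
    oval o (c • x) = c * oval o x := by cases o <;> simp [oval]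

lemma aval_add {n : ℕ} (o : Option (Idx n)) (v x : Idx n → ℝ) :
    aval o (v + x) = oval o v + aval o x := by cases o <;> simp [aval, oval]

noncomputable def phi (n : ℕ) : (Idx n → ℝ) →ᵃ[ℝ] ((PairIdx (2 * n) → ℝ) × (QIdx (2 * n) → ℝ)) where
  toFun x := (fun q => aval (specY q) x, fun r => aval (specZ r) x)
  linear :=
    { toFun := fun x => (fun q => oval (specY q) x, fun r => oval (specZ r) x)
      map_add' := fun x y => by
        refine Prod.ext ?_ ?_ <;> funext c <;> simp [oval_add]
      map_smul' := fun c x => by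
        refine Prod.ext ?_ ?_ <;> funext d <;> simp [oval_smul] }
  map_vadd' := fun p v => by
    refine Prod.ext ?_ ?_ <;> funext c <;>
      simp [aval_add, vadd_eq_add, Pi.add_apply]

open Finset in
def crossSet (n : ℕ) : Finset (PairIdx (2 * n)) := Finset.univ.filter (fun q => ¬ isW q)

noncomputable def lfun (n : ℕ) : ((PairIdx (2 * n) → ℝ) × (QIdx (2 * n) → ℝ)) →ₗ[ℝ] ℝ where
  toFun w := ∑ q ∈ crossSet n, w.1 q
  map_add' w w' := by simp [Finset.sum_add_distrib]
  map_smul' c w := by simp [Finset.mul_sum]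

noncomputable def lcont (n : ℕ) : ((PairIdx (2 * n) → ℝ) × (QIdx (2 * n) → ℝ)) →L[ℝ] ℝ :=
  LinearMap.toContinuousLinearMap (lfun n)

lemma Yval {n : ℕ} (x : Idx n → ℝ) (q : PairIdx (2 * n)) :
    aval (specY q) x = if isW q then x (diag (blk q.val.1)) else 1 := by
  unfold specY
  by_cases h : isW q
  · rw [if_pos h, if_pos h]; rfl
  · rw [if_neg h, if_neg h]; rfl

lemma phiY {n : ℕ} (x : Idx n → ℝ) (q : PairIdx (2 * n)) :
    ((phi n) x).1 q = aval (specY q) x := rfl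

lemma phiZ {n : ℕ} (x : Idx n → ℝ) (r : QIdx (2 * n)) :
    ((phi n) x).2 r = aval (specZ r) x := rfl

lemma isW_wpair {n : ℕ} (i : Fin n) : isW (wpair i) := by
  show (2 * i.val) / 2 = (2 * i.val + 1) / 2
  omega

lemma blk_wpair1 {n : ℕ} (i : Fin n) : blk (wpair i).val.1 = i := by
  apply Fin.ext
  show (2 * i.val) / 2 = i.val
  omega

lemma within_eq {n : ℕ} (q : PairIdx (2 * n)) (h : isW q) : wpair (blk q.val.1) = q := by
  have hlt : (q.val.1 : ℕ) < (q.val.2 : ℕ) := Fin.lt_def.mp q.prop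
  have h' : (q.val.1 : ℕ) / 2 = (q.val.2 : ℕ) / 2 := h
  refine Subtype.ext (Prod.ext ?_ ?_) <;> apply Fin.ext
  · show 2 * ((q.val.1 : ℕ) / 2) = (q.val.1 : ℕ); omega
  · show 2 * ((q.val.1 : ℕ) / 2) + 1 = (q.val.2 : ℕ); omega

lemma phi_mem_QLOP {n : ℕ} {x : Idx n → ℝ} (hx : x ∈ BQP n) : phi n x ∈ QLOP (2 * n) := by
  obtain ⟨hx1, hx2⟩ := hx
  constructor
  · constructor
    · -- 0/1 coordinates
      intro q
      rw [phiY, Yval]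
      by_cases h : isW q
      · rw [if_pos h]; exact hx1 _
      · rw [if_neg h]; right; rfl
    · -- dicycle inequalities
      intro i j k hij hjk
      show 0 ≤ aval (specY (⟨(i, j), hij⟩ : PairIdx (2 * n))) x
          + aval (specY (⟨(j, k), hjk⟩ : PairIdx (2 * n))) x
          - aval (specY (⟨(i, k), hij.trans hjk⟩ : PairIdx (2 * n))) x ∧
        aval (specY (⟨(i, j), hij⟩ : PairIdx (2 * n))) x
          + aval (specY (⟨(j, k), hjk⟩ : PairIdx (2 * n))) x
          - aval (specY (⟨(i, k), hij.trans hjk⟩ : PairIdx (2 * n))) x ≤ 1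
      rw [Yval x ⟨(i, j), hij⟩, Yval x ⟨(j, k), hjk⟩, Yval x ⟨(i, k), hij.trans hjk⟩]
      have hij' : (i : ℕ) < (j : ℕ) := Fin.lt_def.mp hij
      have hjk' : (j : ℕ) < (k : ℕ) := Fin.lt_def.mp hjk
      have e1 : isW (⟨(i, j), hij⟩ : PairIdx (2 * n)) ↔ (i : ℕ) / 2 = (j : ℕ) / 2 := Iff.rfl
      have e2 : isW (⟨(j, k), hjk⟩ : PairIdx (2 * n)) ↔ (j : ℕ) / 2 = (k : ℕ) / 2 := Iff.rfl
      have e3 : isW (⟨(i, k), hij.trans hjk⟩ : PairIdx (2 * n)) ↔ (i : ℕ) / 2 = (k : ℕ) / 2 :=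
        Iff.rfl
      by_cases h1 : (i : ℕ) / 2 = (j : ℕ) / 2 <;> by_cases h2 : (j : ℕ) / 2 = (k : ℕ) / 2
      · exfalso; omega
      · have h3 : ¬ (i : ℕ) / 2 = (k : ℕ) / 2 := by omega
        rw [if_pos (e1.mpr h1), if_neg (fun hc => h2 (e2.mp hc)),
          if_neg (fun hc => h3 (e3.mp hc))]
        rcases hx1 (diag (blk ((⟨(i, j), hij⟩ : PairIdx (2 * n))).val.1)) with h0 | h0 <;>
          rw [h0] <;> norm_num
      · have h3 : ¬ (i : ℕ) / 2 = (k : ℕ) / 2 := by omega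
        rw [if_neg (fun hc => h1 (e1.mp hc)), if_pos (e2.mpr h2),
          if_neg (fun hc => h3 (e3.mp hc))]
        rcases hx1 (diag (blk ((⟨(j, k), hjk⟩ : PairIdx (2 * n))).val.1)) with h0 | h0 <;>
          rw [h0] <;> norm_num
      · have h3 : ¬ (i : ℕ) / 2 = (k : ℕ) / 2 := by omega
        rw [if_neg (fun hc => h1 (e1.mp hc)), if_neg (fun hc => h2 (e2.mp hc)),
          if_neg (fun hc => h3 (e3.mp hc))]
        norm_num
  · -- z = y * y
    rintro ⟨⟨p, q⟩, hr⟩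
    show aval (specZ ⟨(p, q), hr⟩) x = aval (specY p) x * aval (specY q) x
    rw [Yval, Yval]
    unfold specZ
    by_cases h1 : isW p <;> by_cases h2 : isW q
    · rw [if_pos h1, if_pos h2, if_pos h1, if_pos h2]
      show x ⟨(blk p.val.1, blk q.val.1), _⟩ = _
      rcases lt_or_eq_of_le (QIdx_le (⟨(p, q), hr⟩ : QIdx (2 * n))) with hlt | heq
      · exact hx2 _ _ hlt
      · have heq' : blk p.val.1 = blk q.val.1 := heq
        have e : (⟨(blk p.val.1, blk q.val.1), QIdx_le (⟨(p, q), hr⟩ : QIdx (2 * n))⟩ : Idx n)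
            = diag (blk p.val.1) := Subtype.ext (Prod.ext rfl heq'.symm)
        rw [e, ← heq']
        rcases hx1 (diag (blk p.val.1)) with h0 | h0 <;> rw [h0] <;> norm_num
    · rw [if_pos h1, if_neg h2, if_pos h1, if_neg h2]
      show x (diag (blk p.val.1)) = x (diag (blk p.val.1)) * 1
      ring
    · rw [if_neg h1, if_pos h2, if_neg h1, if_pos h2]
      show x (diag (blk q.val.1)) = 1 * x (diag (blk q.val.1))
      ring
    · rw [if_neg h1, if_neg h2, if_neg h1, if_neg h2]
      show (1 : ℝ) = 1 * 1
      ring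

lemma BQP_prod {n : ℕ} {x : Idx n → ℝ} (hx : x ∈ BQP n) (i j : Fin n) (h : i ≤ j) :
    x ⟨(i, j), h⟩ = x (diag i) * x (diag j) := by
  rcases lt_or_eq_of_le h with hlt | heq
  · exact hx.2 i j hlt
  · have heq' : i = j := heq
    subst heq'
    have e : (⟨(i, i), h⟩ : Idx n) = diag i := rfl
    rw [e]
    rcases hx.1 (diag i) with h0 | h0 <;> rw [h0] <;> norm_num

lemma lfun_phi {n : ℕ} (x : Idx n → ℝ) : lfun n (phi n x) = ((crossSet n).card : ℝ) := by
  have h : ∀ q ∈ crossSet n, ((phi n) x).1 q = (1 : ℝ) := by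
    intro q hq
    have hq' : ¬ isW q := (Finset.mem_filter.mp hq).2
    rw [phiY, Yval, if_neg hq']
  calc lfun n (phi n x) = ∑ q ∈ crossSet n, ((phi n) x).1 q := rfl
    _ = ∑ _q ∈ crossSet n, (1 : ℝ) := Finset.sum_congr rfl h
    _ = ((crossSet n).card : ℝ) := by simp

lemma lfun_le {n : ℕ} {w : (PairIdx (2 * n) → ℝ) × (QIdx (2 * n) → ℝ)}
    (hw : w ∈ QLOP (2 * n)) : lfun n w ≤ ((crossSet n).card : ℝ) := by
  calc lfun n w = ∑ q ∈ crossSet n, w.1 q := rfl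
    _ ≤ ∑ _q ∈ crossSet n, (1 : ℝ) := by
        refine Finset.sum_le_sum fun q _ => ?_
        rcases hw.1.1 q with h | h <;> rw [h] <;> norm_num
    _ = ((crossSet n).card : ℝ) := by simp

lemma cross_ones {n : ℕ} {w : (PairIdx (2 * n) → ℝ) × (QIdx (2 * n) → ℝ)}
    (hw : w ∈ QLOP (2 * n)) (hl : lfun n w = ((crossSet n).card : ℝ)) :
    ∀ q, ¬ isW q → w.1 q = 1 := by
  by_contra hc
  push_neg at hc
  obtain ⟨q0, hq0, hne⟩ := hc
  have hq0' : q0 ∈ crossSet n := Finset.mem_filter.mpr ⟨Finset.mem_univ _, hq0⟩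
  have hlt : w.1 q0 < 1 := by
    rcases hw.1.1 q0 with h | h
    · rw [h]; norm_num
    · exact absurd h hne
  have hstrict : ∑ q ∈ crossSet n, w.1 q < ∑ _q ∈ crossSet n, (1 : ℝ) := by
    refine Finset.sum_lt_sum (fun q _ => ?_) ⟨q0, hq0', hlt⟩
    rcases hw.1.1 q with h | h <;> rw [h] <;> norm_num
  have h1 : ∑ _q ∈ crossSet n, (1 : ℝ) = ((crossSet n).card : ℝ) := by simp
  have h2 : lfun n w = ∑ q ∈ crossSet n, w.1 q := rfl
  rw [h1] at hstrict
  rw [h2] at hl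
  linarith

lemma face_sub {n : ℕ} {w : (PairIdx (2 * n) → ℝ) × (QIdx (2 * n) → ℝ)}
    (hw : w ∈ QLOP (2 * n)) (hl : lfun n w = ((crossSet n).card : ℝ)) :
    w ∈ (phi n) '' (BQP n) := by
  classical
  have hone := cross_ones hw hl
  set x : Idx n → ℝ := fun p => if p.val.1 = p.val.2 then w.1 (wpair p.val.1)
    else w.1 (wpair p.val.1) * w.1 (wpair p.val.2) with hxdef
  have hdiag : ∀ i : Fin n, x (diag i) = w.1 (wpair i) := by
    intro i
    rw [hxdef]
    dsimp only [diag]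
    rw [if_pos rfl]
  have hx01 : ∀ p, x p = 0 ∨ x p = 1 := by
    intro p
    rw [hxdef]
    dsimp only
    split_ifs
    · exact hw.1.1 _
    · rcases hw.1.1 (wpair p.val.1) with h | h <;> rcases hw.1.1 (wpair p.val.2) with h' | h' <;>
        rw [h, h'] <;> norm_num
  have hxBQP : x ∈ BQP n := by
    refine ⟨hx01, ?_⟩
    intro i j hij
    have e0 : x ⟨(i, j), le_of_lt hij⟩ = w.1 (wpair i) * w.1 (wpair j) := by
      rw [hxdef]
      dsimp only
      rw [if_neg (Fin.ne_of_lt hij)]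
    have e1 : x ⟨(i, i), le_refl i⟩ = w.1 (wpair i) := hdiag i
    have e2 : x ⟨(j, j), le_refl j⟩ = w.1 (wpair j) := hdiag j
    rw [e0, e1, e2]
  refine ⟨x, hxBQP, ?_⟩
  have hYeq : ∀ q : PairIdx (2 * n), ((phi n) x).1 q = w.1 q := by
    intro q
    rw [phiY, Yval]
    by_cases h : isW q
    · rw [if_pos h, hdiag, within_eq q h]
    · rw [if_neg h, hone q h]
  refine Prod.ext (funext hYeq) ?_
  funext r
  show ((phi n) x).2 r = w.2 r
  rw [phiZ, hw.2 r]
  obtain ⟨⟨p, q⟩, hr⟩ := r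
  show aval (specZ ⟨(p, q), hr⟩) x = w.1 p * w.1 q
  unfold specZ
  by_cases h1 : isW p <;> by_cases h2 : isW q
  · rw [if_pos h1, if_pos h2]
    have hp : w.1 p = x (diag (blk p.val.1)) := by rw [hdiag, within_eq p h1]
    have hq : w.1 q = x (diag (blk q.val.1)) := by rw [hdiag, within_eq q h2]
    rw [hp, hq]
    exact BQP_prod hxBQP _ _ _
  · rw [if_pos h1, if_neg h2, hone q h2, mul_one]
    show x (diag (blk p.val.1)) = w.1 p
    rw [hdiag, within_eq p h1]
  · rw [if_neg h1, if_pos h2, hone p h1, one_mul]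
    show x (diag (blk q.val.1)) = w.1 q
    rw [hdiag, within_eq q h2]
  · rw [if_neg h1, if_neg h2, hone p h1, hone q h2]
    show (1 : ℝ) = 1 * 1
    norm_num

lemma phi_inj (n : ℕ) : Function.Injective (phi n) := by
  intro x x' h
  funext p
  obtain ⟨⟨i, j⟩, hij⟩ := p
  have hY : ∀ q, aval (specY q) x = aval (specY q) x' := by
    intro q; rw [← phiY, ← phiY, h]
  have hZ : ∀ r, aval (specZ r) x = aval (specZ r) x' := by
    intro r; rw [← phiZ, ← phiZ, h]
  rcases lt_or_eq_of_le hij with hlt | heq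
  · have hlt' : (i : ℕ) < (j : ℕ) := Fin.lt_def.mp hlt
    have hlex : ((wpair i : PairIdx (2 * n)), (wpair j : PairIdx (2 * n))).1.val.1
        < ((wpair i : PairIdx (2 * n)), (wpair j : PairIdx (2 * n))).2.val.1 :=
      Fin.mk_lt_mk.mpr (by omega)
    have e : specZ (⟨(wpair i, wpair j), Or.inl hlex⟩ : QIdx (2 * n)) = some ⟨(i, j), hij⟩ := by
      unfold specZ
      rw [if_pos (isW_wpair i), if_pos (isW_wpair j)]
      congr 1
      exact Subtype.ext (Prod.ext (blk_wpair1 i) (blk_wpair1 j))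
    have hz := hZ (⟨(wpair i, wpair j), Or.inl hlex⟩ : QIdx (2 * n))
    rw [e] at hz
    exact hz
  · have heq' : i = j := heq
    subst heq'
    have hy := hY (wpair i)
    rw [Yval, Yval, if_pos (isW_wpair i), if_pos (isW_wpair i), blk_wpair1] at hy
    exact hy

lemma mem_hull_max {E : Type*} [AddCommGroup E] [Module ℝ E] {s : Set E}
    (l : E →ₗ[ℝ] ℝ) {C : ℝ} (hs : ∀ y ∈ s, l y ≤ C) {x : E}
    (hx : x ∈ convexHull ℝ s) (hxC : C ≤ l x) :
    x ∈ convexHull ℝ {y | y ∈ s ∧ l y = C} := by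
  classical
  rw [convexHull_eq] at hx
  obtain ⟨ι, t, w, z, hw0, hw1, hz, hxe⟩ := hx
  have hsum : l x = ∑ i ∈ t, w i * l (z i) := by
    rw [← hxe, Finset.centerMass_eq_of_sum_1 _ _ hw1, map_sum]
    simp [smul_eq_mul]
  have hmax : ∀ i ∈ t, w i ≠ 0 → l (z i) = C := by
    by_contra hcon
    push_neg at hcon
    obtain ⟨i0, hi0t, hi0w, hi0⟩ := hcon
    have hlt : l (z i0) < C := lt_of_le_of_ne (hs _ (hz _ hi0t)) hi0
    have hw0' : 0 < w i0 := lt_of_le_of_ne (hw0 _ hi0t) (Ne.symm hi0w)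
    have hstrict : ∑ i ∈ t, w i * l (z i) < ∑ i ∈ t, w i * C := by
      refine Finset.sum_lt_sum (fun i hi => ?_) ⟨i0, hi0t, ?_⟩
      · exact mul_le_mul_of_nonneg_left (hs _ (hz _ hi)) (hw0 _ hi)
      · exact mul_lt_mul_of_pos_left hlt hw0'
    rw [← Finset.sum_mul, hw1, one_mul] at hstrict
    linarith [hsum ▸ hxC]
  rw [← hxe, ← Finset.centerMass_filter_ne_zero]
  refine Finset.centerMass_mem_convexHull _ (fun i hi => hw0 i (Finset.mem_filter.mp hi).1)
    ?_ (fun i hi => ?_)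
  · rw [Finset.sum_filter_ne_zero, hw1]
    norm_num
  · obtain ⟨hit, hwi⟩ := Finset.mem_filter.mp hi
    exact ⟨hz _ hit, hmax _ hit hwi⟩

/-- For `n ≥ 1`, `conv(BQP_n)` is affinely equivalent to an exposed face of the
quadratic linear ordering polytope `conv(QLOP_{2n})`. -/
theorem stmt13 (n : ℕ) (hn : 1 ≤ n) :
    ∃ F : Set ((PairIdx (2 * n) → ℝ) × (QIdx (2 * n) → ℝ)),
      IsExposed ℝ (convexHull ℝ (QLOP (2 * n))) F ∧
      ∃ φ : (Idx n → ℝ) →ᵃ[ℝ] ((PairIdx (2 * n) → ℝ) × (QIdx (2 * n) → ℝ)),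
        Function.Injective φ ∧ φ '' (convexHull ℝ (BQP n)) = F := by
  classical
  refine ⟨(phi n) '' (convexHull ℝ (BQP n)), ?_, phi n, phi_inj n, rfl⟩
  intro _
  refine ⟨lcont n, ?_⟩
  have hlc : ∀ w, lcont n w = lfun n w := by
    intro w
    rw [lcont, LinearMap.coe_toContinuousLinearMap']
  have himg : (phi n) '' (convexHull ℝ (BQP n)) = convexHull ℝ ((phi n) '' (BQP n)) :=
    AffineMap.image_convexHull (phi n) (BQP n)
  have hsub : (phi n) '' (BQP n) ⊆ QLOP (2 * n) := by
    rintro _ ⟨x, hx, rfl⟩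
    exact phi_mem_QLOP hx
  have hA_le : ∀ y ∈ convexHull ℝ (QLOP (2 * n)), lfun n y ≤ ((crossSet n).card : ℝ) := by
    intro y hy
    exact convexHull_min (fun w hw => lfun_le hw)
      (convex_halfSpace_le (lfun n).isLinear _) hy
  have hz : (fun _ => (0 : ℝ)) ∈ BQP n :=
    ⟨fun p => Or.inl rfl, fun i j h => by norm_num⟩
  have hzA : phi n (fun _ => (0 : ℝ)) ∈ convexHull ℝ (QLOP (2 * n)) :=
    subset_convexHull ℝ _ (phi_mem_QLOP hz)
  ext w
  simp only [Set.mem_setOf_eq]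
  constructor
  · rintro ⟨b, hb, rfl⟩
    have hwA : phi n b ∈ convexHull ℝ (QLOP (2 * n)) :=
      convexHull_mono hsub (himg ▸ Set.mem_image_of_mem _ hb)
    refine ⟨hwA, ?_⟩
    intro y hy
    rw [hlc, hlc, lfun_phi]
    exact hA_le y hy
  · rintro ⟨hwA, hmax⟩
    have h1 : ((crossSet n).card : ℝ) ≤ lfun n w := by
      have h := hmax _ hzA
      rw [hlc, hlc, lfun_phi] at h
      exact h
    have h2 : w ∈ convexHull ℝ {y | y ∈ QLOP (2 * n) ∧ lfun n y = ((crossSet n).card : ℝ)} :=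
      mem_hull_max (lfun n) (fun y hy => lfun_le hy) hwA h1
    have h3 : {y | y ∈ QLOP (2 * n) ∧ lfun n y = ((crossSet n).card : ℝ)}
        ⊆ (phi n) '' (BQP n) := by
      rintro y ⟨hy, hyl⟩
      exact face_sub hy hyl
    rw [himg]
    exact convexHull_mono h3 h2
end

section
/- Let n ≥ 1, m = 2n, and J = {(2i−1, 2i) : i = 1,…,n}. Then {y ∈ LOP_m : y_{ij} = 0 for all pairs i<j with (i,j) ∉ J} is exactly the set of vectors that vanish on all coordinates outside J and take arbitrary values in {0,1} on the n coordinates in J. Consequently the set F = conv(LOP_m) ∩ {y : y_{ij} = 0 for all (i,j) ∉ J} is an exposed face of conv(LOP_m) that is affinely equivalent to the n-dimensional cube [0,1]^n. -/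
/-- The set `J = {(2i−1, 2i) : i = 1,…,n}` of pairs (0-indexed: `(2i, 2i+1)`). -/
def Jlop (n : ℕ) : Set (PairIdx (2 * n)) :=
  {q | ∃ i : ℕ, i < n ∧ (q.val.1 : ℕ) = 2 * i ∧ (q.val.2 : ℕ) = 2 * i + 1}

instance inst_s14 (m : ℕ) : Fintype (PairIdx m) := by unfold PairIdx; infer_instance

lemma mem_Jlop_iff {n : ℕ} (q : PairIdx (2 * n)) :
    q ∈ Jlop n ↔ (q.val.1 : ℕ) % 2 = 0 ∧ (q.val.2 : ℕ) = (q.val.1 : ℕ) + 1 := by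
  constructor
  · rintro ⟨i, hi, h1, h2⟩; omega
  · rintro ⟨h1, h2⟩
    have := q.val.1.isLt
    exact ⟨(q.val.1 : ℕ) / 2, by omega, by omega, by omega⟩

instance {n : ℕ} : DecidablePred (· ∈ Jlop n) := fun q =>
  decidable_of_iff _ (mem_Jlop_iff q).symm

lemma zero_mem_LOP (m : ℕ) : (0 : PairIdx m → ℝ) ∈ LOP m :=
  ⟨fun _ => Or.inl rfl, fun _ _ _ _ _ => by
    show (0:ℝ) ≤ 0 + 0 - 0 ∧ (0:ℝ) + 0 - 0 ≤ 1; norm_num⟩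

lemma LOP_subset_box (m : ℕ) : LOP m ⊆ {y | ∀ q, 0 ≤ y q ∧ y q ≤ 1} := by
  rintro y ⟨h01, -⟩ q
  rcases h01 q with h | h <;> rw [h] <;> norm_num

lemma box_convex (m : ℕ) : Convex ℝ {y : PairIdx m → ℝ | ∀ q, 0 ≤ y q ∧ y q ≤ 1} := by
  have : {y : PairIdx m → ℝ | ∀ q, 0 ≤ y q ∧ y q ≤ 1}
      = Set.pi Set.univ (fun _ => Set.Icc (0:ℝ) 1) := by
    ext y; simp [Set.mem_pi, Set.mem_Icc, forall_and, Pi.le_def]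
  rw [this]
  exact convex_pi fun _ _ => convex_Icc 0 1

lemma convLOP_subset_box (m : ℕ) :
    convexHull ℝ (LOP m) ⊆ {y | ∀ q, 0 ≤ y q ∧ y q ≤ 1} :=
  convexHull_min (LOP_subset_box m) (box_convex m)

lemma part1 (n : ℕ) :
    ({y ∈ LOP (2 * n) | ∀ q ∉ Jlop n, y q = 0} =
      {y | (∀ q ∉ Jlop n, y q = 0) ∧ ∀ q ∈ Jlop n, y q = 0 ∨ y q = 1}) := by
  ext y
  simp only [Set.mem_setOf_eq, Set.sep_setOf]
  constructor
  · rintro ⟨⟨h01, -⟩, hsupp⟩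
    exact ⟨hsupp, fun q _ => h01 q⟩
  · rintro ⟨hsupp, hJ⟩
    have h01 : ∀ q, y q = 0 ∨ y q = 1 := fun q => by
      by_cases h : q ∈ Jlop n
      · exact hJ q h
      · exact Or.inl (hsupp q h)
    have hnz : ∀ q, y q ≠ 0 → q ∈ Jlop n := fun q h => by
      by_contra hq; exact h (hsupp q hq)
    refine ⟨⟨h01, fun i j k hij hjk => ?_⟩, hsupp⟩
    have hij' : (i : ℕ) < (j : ℕ) := hij
    have hjk' : (j : ℕ) < (k : ℕ) := hjk
    have hik : y ⟨(i, k), hij.trans hjk⟩ = 0 := by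
      apply hsupp
      refine mt (mem_Jlop_iff _).1 ?_
      rintro ⟨-, h2⟩
      simp only at h2
      omega
    have hnotboth : ¬ (y ⟨(i, j), hij⟩ = 1 ∧ y ⟨(j, k), hjk⟩ = 1) := by
      rintro ⟨h1, h2⟩
      have m1 := hnz ⟨(i, j), hij⟩ (by rw [h1]; norm_num)
      have m2 := hnz ⟨(j, k), hjk⟩ (by rw [h2]; norm_num)
      replace m1 := (mem_Jlop_iff _).1 m1; replace m2 := (mem_Jlop_iff _).1 m2
      simp only at m1 m2
      omega
    rcases h01 ⟨(i, j), hij⟩ with h1 | h1 <;> rcases h01 ⟨(j, k), hjk⟩ with h2 | h2 <;>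
      rw [h1, h2, hik] <;> norm_num <;> exact absurd ⟨h1, h2⟩ hnotboth

/-- index of a pair in J -/
def lopIdx {n : ℕ} (q : PairIdx (2 * n)) : Fin n :=
  ⟨(q.val.1 : ℕ) / 2, by have := q.val.1.isLt; omega⟩

/-- the pair `(2i, 2i+1)` -/
def qpair {n : ℕ} (i : Fin n) : PairIdx (2 * n) :=
  ⟨(⟨2 * (i : ℕ), by omega⟩, ⟨2 * (i : ℕ) + 1, by omega⟩), by
    simp [Fin.lt_def]⟩

lemma qpair_mem {n : ℕ} (i : Fin n) : qpair i ∈ Jlop n :=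
  ⟨(i : ℕ), i.isLt, rfl, rfl⟩

lemma lopIdx_qpair {n : ℕ} (i : Fin n) : lopIdx (qpair i) = i := by
  apply Fin.ext
  simp only [lopIdx, qpair]
  omega

lemma qpair_lopIdx {n : ℕ} (q : PairIdx (2 * n)) (hq : q ∈ Jlop n) :
    qpair (lopIdx q) = q := by
  rw [mem_Jlop_iff] at hq
  apply Subtype.ext
  apply Prod.ext <;> apply Fin.ext <;> simp [qpair, lopIdx] <;> omega

noncomputable def philin (n : ℕ) : (Fin n → ℝ) →ₗ[ℝ] (PairIdx (2 * n) → ℝ) where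
  toFun c q := if q ∈ Jlop n then c (lopIdx q) else 0
  map_add' c d := by funext q; by_cases h : q ∈ Jlop n <;> simp [h]
  map_smul' r c := by funext q; by_cases h : q ∈ Jlop n <;> simp [h]

lemma philin_apply {n : ℕ} (c : Fin n → ℝ) (q : PairIdx (2 * n)) :
    philin n c q = if q ∈ Jlop n then c (lopIdx q) else 0 := rfl

/-- The vertices of `LOP_{2n}` vanishing outside `J` are exactly the 0/1 vectors
supported on `J` with arbitrary 0/1 values on `J`; consequently
`F = conv(LOP_{2n}) ∩ {y : y_q = 0 ∀ q ∉ J}` is an exposed face of `conv(LOP_{2n})`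
affinely equivalent to the cube `[0,1]^n`. -/
theorem stmt14 (n : ℕ) (hn : 1 ≤ n) :
    ({y ∈ LOP (2 * n) | ∀ q ∉ Jlop n, y q = 0} =
      {y | (∀ q ∉ Jlop n, y q = 0) ∧ ∀ q ∈ Jlop n, y q = 0 ∨ y q = 1}) ∧
    IsExposed ℝ (convexHull ℝ (LOP (2 * n)))
      (convexHull ℝ (LOP (2 * n)) ∩ {y | ∀ q ∉ Jlop n, y q = 0}) ∧
    ∃ φ : (Fin n → ℝ) →ᵃ[ℝ] (PairIdx (2 * n) → ℝ),
      Function.Injective φ ∧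
      φ '' {c | ∀ i, 0 ≤ c i ∧ c i ≤ 1} =
        convexHull ℝ (LOP (2 * n)) ∩ {y | ∀ q ∉ Jlop n, y q = 0} := by
  refine ⟨part1 n, ?_, ?_⟩
  · -- exposed face
    intro _
    classical
    set S : Finset (PairIdx (2 * n)) := Finset.univ.filter (· ∉ Jlop n) with hS
    refine ⟨LinearMap.toContinuousLinearMap (∑ q ∈ S, -(LinearMap.proj q)), ?_⟩
    set A := convexHull ℝ (LOP (2 * n)) with hA
    have hl : ∀ x : PairIdx (2 * n) → ℝ,
        (LinearMap.toContinuousLinearMap (∑ q ∈ S, -(LinearMap.proj q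
          (R := ℝ) (φ := fun _ : PairIdx (2*n) => ℝ)))) x = ∑ q ∈ S, -(x q) := by
      intro x
      simp [LinearMap.toContinuousLinearMap]
    have hnonneg : ∀ x ∈ A, ∀ q, (0:ℝ) ≤ x q := fun x hx q =>
      (convLOP_subset_box (2 * n) hx q).1
    have hle : ∀ x ∈ A, ∑ q ∈ S, -(x q) ≤ 0 := by
      intro x hx
      apply Finset.sum_nonpos
      intro q _
      simpa using hnonneg x hx q
    ext x
    constructor
    · rintro ⟨hxA, hxs⟩
      refine ⟨hxA, fun y hy => ?_⟩
      rw [hl, hl]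
      have : ∑ q ∈ S, -(x q) = 0 := by
        apply Finset.sum_eq_zero
        intro q hq
        rw [hS, Finset.mem_filter] at hq
        rw [hxs q hq.2]; ring
      rw [this]
      exact hle y hy
    · rintro ⟨hxA, hmax⟩
      refine ⟨hxA, fun q hq => ?_⟩
      have h0A : (0 : PairIdx (2*n) → ℝ) ∈ A := subset_convexHull ℝ _ (zero_mem_LOP _)
      have h1 := hmax 0 h0A
      rw [hl, hl] at h1
      simp only [Pi.zero_apply, neg_zero, Finset.sum_const_zero] at h1
      have h2 : ∑ q ∈ S, -(x q) = 0 := le_antisymm (hle x hxA) h1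
      have h3 : ∑ q ∈ S, x q = 0 := by
        have := h2; rw [Finset.sum_neg_distrib] at this; linarith
      have := (Finset.sum_eq_zero_iff_of_nonneg
        (fun q _ => hnonneg x hxA q)).1 h3 q (by rw [hS, Finset.mem_filter]; exact ⟨Finset.mem_univ q, hq⟩)
      exact this
  · -- affine cube
    classical
    refine ⟨(philin n).toAffineMap, ?_, ?_⟩
    · intro c d h
      funext i
      have := congrFun h (qpair i)
      simp only [LinearMap.coe_toAffineMap] at this
      rw [philin_apply, philin_apply, if_pos (qpair_mem i), if_pos (qpair_mem i),
        lopIdx_qpair] at this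
      exact this
    · apply Set.Subset.antisymm
      · -- image of cube ⊆ F
        have hcube : {c : Fin n → ℝ | ∀ i, 0 ≤ c i ∧ c i ≤ 1}
            = convexHull ℝ (Set.pi Set.univ fun _ : Fin n => ({0, 1} : Set ℝ)) := by
          rw [convexHull_pi]
          ext c
          simp [Set.mem_pi, convexHull_pair, segment_eq_Icc (zero_le_one (α := ℝ)), Set.mem_Icc, forall_and, Pi.le_def]
        rintro y ⟨c, hc, rfl⟩
        simp only [LinearMap.coe_toAffineMap] at *
        constructor
        · -- in convexHull
          have hcmem : c ∈ convexHull ℝ (Set.pi Set.univ fun _ : Fin n => ({0,1} : Set ℝ)) := by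
            rw [← hcube]; exact hc
          have himg : philin n '' (Set.pi Set.univ fun _ : Fin n => ({0,1} : Set ℝ))
              ⊆ LOP (2 * n) := by
            rintro y ⟨d, hd, rfl⟩
            have hsupp : ∀ q ∉ Jlop n, philin n d q = 0 := by
              intro q hq; rw [philin_apply, if_neg hq]
            have hJ : ∀ q ∈ Jlop n, philin n d q = 0 ∨ philin n d q = 1 := by
              intro q hq
              rw [philin_apply, if_pos hq]
              simpa using hd (lopIdx q) (Set.mem_univ _)
            have : philin n d ∈ {y | (∀ q ∉ Jlop n, y q = 0) ∧
                ∀ q ∈ Jlop n, y q = 0 ∨ y q = 1} := ⟨hsupp, hJ⟩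
            rw [← part1 n] at this
            exact this.1
          have := (philin n).image_convexHull (Set.pi Set.univ fun _ : Fin n => ({0,1} : Set ℝ))
          have hmem : philin n c ∈ philin n '' (convexHull ℝ
              (Set.pi Set.univ fun _ : Fin n => ({0,1} : Set ℝ))) :=
            Set.mem_image_of_mem _ hcmem
          rw [this] at hmem
          exact convexHull_mono himg hmem
        · intro q hq
          rw [philin_apply, if_neg hq]
      · -- F ⊆ image of cube
        rintro y ⟨hyA, hys⟩
        refine ⟨fun i => y (qpair i), fun i => convLOP_subset_box _ hyA (qpair i), ?_⟩
        simp only [LinearMap.coe_toAffineMap]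
        funext q
        rw [philin_apply]
        by_cases h : q ∈ Jlop n
        · rw [if_pos h, qpair_lopIdx q h]
        · rw [if_neg h, hys q h]
end

section
/- For every n ≥ 1, the Boolean quadratic polytope conv(BQP_n) is affinely equivalent to an exposed face of the quadratic assignment polytope conv(QAP_m) with m = 2n: there is an exposed face F of conv(QAP_{2n}) and an injective affine map φ : ℝ^{Δ_n} → ℝ^{d} (d the number of coordinates of QAP_{2n}) with φ(conv(BQP_n)) = F. -/
/-- Index set of lexicographically ordered pairs `(i,j) ≺ (k,l)` of entries of an
`m × m` matrix, for the quadratic coordinates `z_{ijkl}`. -/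
def QAIdx (m : ℕ) : Type :=
  {r : (Fin m × Fin m) × (Fin m × Fin m) //
    r.1.1 < r.2.1 ∨ (r.1.1 = r.2.1 ∧ r.1.2 < r.2.2)}

/-- The vertex set of the quadratic assignment polytope: vectors `(y, z)` where `y`
is a permutation matrix and `z_{ijkl} = y_{ij} · y_{kl}` for all `(i,j) ≺ (k,l)`. -/
def QAP (m : ℕ) : Set ((Fin m × Fin m → ℝ) × (QAIdx m → ℝ)) :=
  {w | (∀ q, w.1 q = 0 ∨ w.1 q = 1) ∧
       (∀ i, ∑ j, w.1 (i, j) = 1) ∧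
       (∀ j, ∑ i, w.1 (i, j) = 1) ∧
       ∀ r : QAIdx m, w.2 r = w.1 r.val.1 * w.1 r.val.2}

namespace Stmt15

instance (m : ℕ) : Fintype (QAIdx m) :=
  inferInstanceAs (Fintype {r : (Fin m × Fin m) × (Fin m × Fin m) //
    r.1.1 < r.2.1 ∨ (r.1.1 = r.2.1 ∧ r.1.2 < r.2.2)})

instance (n : ℕ) : Fintype (Idx n) :=
  inferInstanceAs (Fintype {p : Fin n × Fin n // p.1 ≤ p.2})

variable {n : ℕ}

def eqv (n : ℕ) : Fin n ⊕ Fin n ≃ Fin (2 * n) :=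
  finSumFinEquiv.trans (finCongr (two_mul n).symm)

def blk (a : Fin (2 * n)) : Fin n := Sum.elim id id ((eqv n).symm a)
def sgn (a : Fin (2 * n)) : Bool := ((eqv n).symm a).isLeft
def E1 (i : Fin n) : Fin (2 * n) := eqv n (Sum.inl i)
def E2 (i : Fin n) : Fin (2 * n) := eqv n (Sum.inr i)

@[simp] lemma blk_E1 (i : Fin n) : blk (E1 i) = i := by simp [blk, E1]
@[simp] lemma blk_E2 (i : Fin n) : blk (E2 i) = i := by simp [blk, E2]
@[simp] lemma sgn_E1 (i : Fin n) : sgn (E1 i) = true := by simp [sgn, E1]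
@[simp] lemma sgn_E2 (i : Fin n) : sgn (E2 i) = false := by simp [sgn, E2]

lemma E1_val (i : Fin n) : (E1 i : Fin (2 * n)).val = i.val := by
  simp [E1, eqv, finSumFinEquiv]

lemma E1_lt_E1 {i j : Fin n} (h : i < j) : E1 i < E1 j := by
  rw [Fin.lt_def, E1_val, E1_val]; exact h

/-- every element of `Fin (2*n)` is `E1 (blk a)` or `E2 (blk a)` according to `sgn`. -/
lemma eq_E1_or_E2 (a : Fin (2 * n)) :
    (sgn a = true ∧ a = E1 (blk a)) ∨ (sgn a = false ∧ a = E2 (blk a)) := by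
  rcases h : (eqv n).symm a with i | i
  · left
    constructor
    · simp [sgn, h]
    · have : a = eqv n (Sum.inl i) := by
        rw [← h, Equiv.apply_symm_apply]
      rw [this]; simp [blk, E1]
  · right
    constructor
    · simp [sgn, h]
    · have : a = eqv n (Sum.inr i) := by
        rw [← h, Equiv.apply_symm_apply]
      rw [this]; simp [blk, E2]


def D (x : Idx n → ℝ) (i : Fin n) : ℝ := x ⟨(i, i), le_refl i⟩

def Q (x : Idx n → ℝ) (i j : Fin n) : ℝ :=
  if h : i ≤ j then x ⟨(i, j), h⟩ else x ⟨(j, i), le_of_not_ge h⟩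

lemma Q_symm (x : Idx n → ℝ) (i j : Fin n) : Q x i j = Q x j i := by
  unfold Q
  rcases le_or_gt i j with h | h
  · rcases lt_or_eq_of_le h with h' | h'
    · rw [dif_pos h, dif_neg (not_le_of_gt h')]
    · subst h'; simp
  · rw [dif_neg (not_le_of_gt h), dif_pos (le_of_lt h)]

@[simp] lemma D_add (x y : Idx n → ℝ) (i : Fin n) : D (x + y) i = D x i + D y i := rfl
@[simp] lemma D_smul (c : ℝ) (x : Idx n → ℝ) (i : Fin n) : D (c • x) i = c * D x i := rfl
@[simp] lemma D_zero (i : Fin n) : D (0 : Idx n → ℝ) i = 0 := rfl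

@[simp] lemma Q_add (x y : Idx n → ℝ) (i j : Fin n) : Q (x + y) i j = Q x i j + Q y i j := by
  unfold Q; split <;> rfl
@[simp] lemma Q_smul (c : ℝ) (x : Idx n → ℝ) (i j : Fin n) : Q (c • x) i j = c * Q x i j := by
  unfold Q; split <;> rfl
@[simp] lemma Q_zero (i j : Fin n) : Q (0 : Idx n → ℝ) i j = 0 := by
  unfold Q; split <;> rfl

lemma Q_diag (x : Idx n → ℝ) (i : Fin n) : Q x i i = D x i := by simp [Q, D]

/-- For `x ∈ BQP n`, `Q x i j = D x i * D x j`. -/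
lemma Q_eq_mul {x : Idx n → ℝ} (hx : x ∈ BQP n) (i j : Fin n) :
    Q x i j = D x i * D x j := by
  obtain ⟨h01, hprod⟩ := hx
  rcases lt_trichotomy i j with h | h | h
  · rw [show Q x i j = x ⟨(i, j), le_of_lt h⟩ from dif_pos (le_of_lt h)]
    exact hprod i j h
  · subst h
    rw [Q_diag]
    rcases h01 ⟨(i, i), le_refl i⟩ with h0 | h1
    · show x _ = x _ * x _
      rw [h0]; ring
    · show x _ = x _ * x _
      rw [h1]; ring
  · rw [Q_symm, show Q x j i = x ⟨(j, i), le_of_lt h⟩ from dif_pos (le_of_lt h)]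
    rw [hprod j i h]
    show x _ * x _ = x _ * x _
    ring

/-- product expression: value of `ε₁(D i) * ε₂(D j)` reduced to affine form. -/
def B (x : Idx n → ℝ) (i j : Fin n) (α β : Bool) : ℝ :=
  match α, β with
  | true, true => Q x i j
  | true, false => D x i - Q x i j
  | false, true => D x j - Q x i j
  | false, false => 1 - D x i - D x j + Q x i j

/-- linear part of `B`. -/
def Blin (x : Idx n → ℝ) (i j : Fin n) (α β : Bool) : ℝ :=
  match α, β with
  | true, true => Q x i j
  | true, false => D x i - Q x i j
  | false, true => D x j - Q x i j
  | false, false => - D x i - D x j + Q x i j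

lemma B_eq (x : Idx n → ℝ) (i j : Fin n) (α β : Bool) :
    B x i j α β = Blin x i j α β + B 0 i j α β := by
  cases α <;> cases β <;> simp [B, Blin] <;> ring

def Ymap (x : Idx n → ℝ) : Fin (2 * n) × Fin (2 * n) → ℝ := fun q =>
  if blk q.1 = blk q.2 then
    (if sgn q.1 = sgn q.2 then D x (blk q.1) else 1 - D x (blk q.1)) else 0

def Zmap (x : Idx n → ℝ) : QAIdx (2 * n) → ℝ := fun r =>
  if blk r.val.1.1 = blk r.val.1.2 ∧ blk r.val.2.1 = blk r.val.2.2 then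
    B x (blk r.val.1.1) (blk r.val.2.1)
      (sgn r.val.1.1 == sgn r.val.1.2) (sgn r.val.2.1 == sgn r.val.2.2)
  else 0

noncomputable def fmap (x : Idx n → ℝ) : (Fin (2 * n) × Fin (2 * n) → ℝ) × (QAIdx (2 * n) → ℝ) :=
  (Ymap x, Zmap x)

noncomputable def flin (n : ℕ) : (Idx n → ℝ) →ₗ[ℝ] (Fin (2 * n) × Fin (2 * n) → ℝ) × (QAIdx (2 * n) → ℝ) where
  toFun x := (fun q => if blk q.1 = blk q.2 then
      (if sgn q.1 = sgn q.2 then D x (blk q.1) else - D x (blk q.1)) else 0,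
    fun r => if blk r.val.1.1 = blk r.val.1.2 ∧ blk r.val.2.1 = blk r.val.2.2 then
      Blin x (blk r.val.1.1) (blk r.val.2.1)
        (sgn r.val.1.1 == sgn r.val.1.2) (sgn r.val.2.1 == sgn r.val.2.2)
    else 0)
  map_add' x y := by
    refine Prod.ext (funext fun q => ?_) (funext fun r => ?_) <;>
      dsimp only [Prod.fst_add, Prod.snd_add, Pi.add_apply]
    · split_ifs <;> simp <;> ring
    · split_ifs
      · rcases (sgn r.val.1.1 == sgn r.val.1.2) <;> rcases (sgn r.val.2.1 == sgn r.val.2.2) <;>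
          simp [Blin] <;> ring
      · simp
  map_smul' c x := by
    refine Prod.ext (funext fun q => ?_) (funext fun r => ?_) <;>
      dsimp only [RingHom.id_apply, Prod.smul_fst, Prod.smul_snd, Pi.smul_apply, smul_eq_mul]
    · split_ifs <;> simp <;> ring
    · split_ifs
      · rcases (sgn r.val.1.1 == sgn r.val.1.2) <;> rcases (sgn r.val.2.1 == sgn r.val.2.2) <;>
          simp [Blin] <;> ring
      · simp

noncomputable def phi (n : ℕ) : (Idx n → ℝ) →ᵃ[ℝ] (Fin (2 * n) × Fin (2 * n) → ℝ) × (QAIdx (2 * n) → ℝ) :=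
  AffineMap.mk' fmap (flin n) 0 (by
    intro x
    simp only [vsub_eq_sub, sub_zero, vadd_eq_add]
    refine Prod.ext (funext fun q => ?_) (funext fun r => ?_)
    · show Ymap x q = _ + Ymap 0 q
      simp only [flin, fmap, Ymap, LinearMap.coe_mk, AddHom.coe_mk, Prod.fst_add, Pi.add_apply]
      split_ifs <;> simp <;> ring
    · show Zmap x r = _ + Zmap 0 r
      simp only [flin, fmap, Zmap, LinearMap.coe_mk, AddHom.coe_mk, Prod.snd_add, Pi.add_apply]
      split_ifs with h
      · exact B_eq x _ _ _ _
      · simp)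

lemma phi_apply (x : Idx n → ℝ) : phi n x = fmap x := rfl


noncomputable def L (n : ℕ) :
    ((Fin (2 * n) × Fin (2 * n) → ℝ) × (QAIdx (2 * n) → ℝ)) →ₗ[ℝ] ℝ where
  toFun w := ∑ q : Fin (2 * n) × Fin (2 * n), if blk q.1 = blk q.2 then w.1 q else 0
  map_add' w v := by
    rw [← Finset.sum_add_distrib]
    refine Finset.sum_congr rfl fun q _ => ?_
    dsimp only [Prod.fst_add, Pi.add_apply]
    split_ifs <;> simp
  map_smul' c w := by
    dsimp only [RingHom.id_apply]
    rw [smul_eq_mul, Finset.mul_sum]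
    refine Finset.sum_congr rfl fun q _ => ?_
    dsimp only [Prod.smul_fst, Pi.smul_apply, smul_eq_mul]
    split_ifs <;> simp

lemma sum_pair (g : Fin (2 * n) → ℝ) :
    ∑ b, g b = ∑ i : Fin n, g (E1 i) + ∑ i : Fin n, g (E2 i) := by
  rw [← Equiv.sum_comp (eqv n) g, Fintype.sum_sum_type]
  rfl

lemma Ymap_row (x : Idx n → ℝ) (a : Fin (2 * n)) : ∑ b, Ymap x (a, b) = 1 := by
  rw [sum_pair (fun b => Ymap x (a, b))]
  simp only [Ymap, blk_E1, blk_E2, sgn_E1, sgn_E2]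
  rw [Finset.sum_ite_eq, Finset.sum_ite_eq]
  cases h : sgn a <;> simp [h]

lemma Ymap_col (x : Idx n → ℝ) (b : Fin (2 * n)) : ∑ a, Ymap x (a, b) = 1 := by
  rw [sum_pair (fun a => Ymap x (a, b))]
  simp only [Ymap, blk_E1, blk_E2, sgn_E1, sgn_E2]
  rw [Finset.sum_ite_eq', Finset.sum_ite_eq']
  cases h : sgn b <;> simp [h]

lemma Zmap_eq_mul {x : Idx n → ℝ} (hx : x ∈ BQP n) (r : QAIdx (2 * n)) :
    Zmap x r = Ymap x r.val.1 * Ymap x r.val.2 := by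
  obtain ⟨⟨⟨a, b⟩, ⟨c, d⟩⟩, hr⟩ := r
  show (if blk a = blk b ∧ blk c = blk d then _ else _) = Ymap x (a, b) * Ymap x (c, d)
  by_cases h1 : blk a = blk b
  · by_cases h2 : blk c = blk d
    · rw [if_pos ⟨h1, h2⟩]
      show B x (blk a) (blk c) _ _ = _
      simp only [Ymap, if_pos h1, if_pos h2]
      cases ha : sgn a <;> cases hb : sgn b <;> cases hc : sgn c <;> cases hd : sgn d <;>
        simp [B, Q_eq_mul hx] <;> ring
    · rw [if_neg (by tauto)]
      have h0 : Ymap x (c, d) = 0 := if_neg h2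
      rw [h0, mul_zero]
  · rw [if_neg (by tauto)]
    have h0 : Ymap x (a, b) = 0 := if_neg h1
    rw [h0, zero_mul]

lemma fmap_mem_QAP {x : Idx n → ℝ} (hx : x ∈ BQP n) : fmap x ∈ QAP (2 * n) := by
  refine ⟨?_, ?_, ?_, ?_⟩
  · rintro ⟨a, b⟩
    show Ymap x (a, b) = 0 ∨ Ymap x (a, b) = 1
    unfold Ymap
    split_ifs with h1 h2
    · exact hx.1 ⟨(blk a, blk a), le_refl _⟩
    · rcases hx.1 ⟨(blk a, blk a), le_refl _⟩ with h | h
      · right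
        rw [show D x (blk a) = 0 from h]; ring
      · left
        rw [show D x (blk a) = 1 from h]; ring
    · left; rfl
  · exact fun a => Ymap_row x a
  · exact fun b => Ymap_col x b
  · exact fun r => Zmap_eq_mul hx r


lemma sum_w1 {w : (Fin (2 * n) × Fin (2 * n) → ℝ) × (QAIdx (2 * n) → ℝ)}
    (hw : w ∈ QAP (2 * n)) :
    ∑ q : Fin (2 * n) × Fin (2 * n), w.1 q = ((2 * n : ℕ) : ℝ) := by
  rw [Fintype.sum_prod_type]
  have : ∀ a : Fin (2 * n), ∑ b, w.1 (a, b) = 1 := hw.2.1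
  simp [this]

lemma w1_nonneg {w : (Fin (2 * n) × Fin (2 * n) → ℝ) × (QAIdx (2 * n) → ℝ)}
    (hw : w ∈ QAP (2 * n)) (q : Fin (2 * n) × Fin (2 * n)) : 0 ≤ w.1 q := by
  rcases hw.1 q with h | h <;> rw [h] <;> norm_num

lemma L_le {w : (Fin (2 * n) × Fin (2 * n) → ℝ) × (QAIdx (2 * n) → ℝ)}
    (hw : w ∈ QAP (2 * n)) : L n w ≤ ((2 * n : ℕ) : ℝ) := by
  rw [← sum_w1 hw]
  refine Finset.sum_le_sum fun q _ => ?_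
  split_ifs
  · exact le_refl _
  · exact w1_nonneg hw q

lemma L_eq_iff {w : (Fin (2 * n) × Fin (2 * n) → ℝ) × (QAIdx (2 * n) → ℝ)}
    (hw : w ∈ QAP (2 * n)) :
    L n w = ((2 * n : ℕ) : ℝ) ↔
      ∀ q : Fin (2 * n) × Fin (2 * n), blk q.1 ≠ blk q.2 → w.1 q = 0 := by
  rw [← sum_w1 hw]
  have hle : ∀ q ∈ Finset.univ, (if blk q.1 = blk q.2 then w.1 q else 0) ≤ w.1 q := by
    intro q _
    split_ifs
    · exact le_refl _
    · exact w1_nonneg hw q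
  rw [show (L n w = ∑ q : Fin (2 * n) × Fin (2 * n), w.1 q) =
      (∑ q : Fin (2 * n) × Fin (2 * n), (if blk q.1 = blk q.2 then w.1 q else 0) =
        ∑ q : Fin (2 * n) × Fin (2 * n), w.1 q) from rfl]
  rw [Finset.sum_eq_sum_iff_of_le hle]
  constructor
  · intro h q hq
    have := h q (Finset.mem_univ q)
    rw [if_neg hq] at this
    exact this.symm
  · intro h q _
    by_cases hq : blk q.1 = blk q.2
    · rw [if_pos hq]
    · rw [if_neg hq, h q hq]

lemma L_fmap {x : Idx n → ℝ} (hx : x ∈ BQP n) : L n (fmap x) = ((2 * n : ℕ) : ℝ) := by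
  rw [L_eq_iff (fmap_mem_QAP hx)]
  intro q hq
  show Ymap x q = 0
  exact if_neg hq

/-- reconstruction of the BQP point from a block-supported QAP vertex -/
noncomputable def xrec (w : (Fin (2 * n) × Fin (2 * n) → ℝ) × (QAIdx (2 * n) → ℝ)) :
    Idx n → ℝ := fun p =>
  if h : p.val.1 = p.val.2 then w.1 (E1 p.val.1, E1 p.val.1)
  else w.2 ⟨((E1 p.val.1, E1 p.val.1), (E1 p.val.2, E1 p.val.2)),
    Or.inl (E1_lt_E1 (lt_of_le_of_ne p.property h))⟩

lemma xrec_diag (w : (Fin (2 * n) × Fin (2 * n) → ℝ) × (QAIdx (2 * n) → ℝ)) (i : Fin n) :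
    xrec w ⟨(i, i), le_refl i⟩ = w.1 (E1 i, E1 i) := dif_pos rfl

lemma D_xrec (w : (Fin (2 * n) × Fin (2 * n) → ℝ) × (QAIdx (2 * n) → ℝ)) (i : Fin n) :
    D (xrec w) i = w.1 (E1 i, E1 i) := xrec_diag w i

lemma xrec_off (w : (Fin (2 * n) × Fin (2 * n) → ℝ) × (QAIdx (2 * n) → ℝ))
    {i j : Fin n} (h : i < j) (hle : (((i, j) : Fin n × Fin n)).1 ≤ ((i, j) : Fin n × Fin n).2) :
    xrec w ⟨(i, j), hle⟩ =
      w.2 ⟨((E1 i, E1 i), (E1 j, E1 j)), Or.inl (E1_lt_E1 h)⟩ := by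
  show dite _ _ _ = _
  rw [dif_neg (show ¬ i = j from ne_of_lt h)]

lemma sum_E1aux (f : Fin n → ℝ) (i : Fin n) (h0 : ∀ j, j ≠ i → f j = 0) :
    ∑ j, f j = f i :=
  Finset.sum_eq_single i (fun j _ hj => h0 j hj) (fun h => absurd (Finset.mem_univ i) h)


section Reconstruction

variable {w : (Fin (2 * n) × Fin (2 * n) → ℝ) × (QAIdx (2 * n) → ℝ)}

lemma row_E1 (hw : w ∈ QAP (2 * n))
    (hs : ∀ a b : Fin (2 * n), blk a ≠ blk b → w.1 (a, b) = 0) (i : Fin n) :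
    w.1 (E1 i, E1 i) + w.1 (E1 i, E2 i) = 1 := by
  have h := hw.2.1 (E1 i)
  rw [sum_pair (fun b => w.1 (E1 i, b))] at h
  rw [sum_E1aux _ i (fun j hj => hs _ _ (by simpa using hj.symm)),
      sum_E1aux _ i (fun j hj => hs _ _ (by simpa using hj.symm))] at h
  exact h

lemma row_E2 (hw : w ∈ QAP (2 * n))
    (hs : ∀ a b : Fin (2 * n), blk a ≠ blk b → w.1 (a, b) = 0) (i : Fin n) :
    w.1 (E2 i, E1 i) + w.1 (E2 i, E2 i) = 1 := by
  have h := hw.2.1 (E2 i)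
  rw [sum_pair (fun b => w.1 (E2 i, b))] at h
  rw [sum_E1aux _ i (fun j hj => hs _ _ (by simpa using hj.symm)),
      sum_E1aux _ i (fun j hj => hs _ _ (by simpa using hj.symm))] at h
  exact h

lemma col_E1 (hw : w ∈ QAP (2 * n))
    (hs : ∀ a b : Fin (2 * n), blk a ≠ blk b → w.1 (a, b) = 0) (i : Fin n) :
    w.1 (E1 i, E1 i) + w.1 (E2 i, E1 i) = 1 := by
  have h := hw.2.2.1 (E1 i)
  rw [sum_pair (fun a => w.1 (a, E1 i))] at h
  rw [sum_E1aux _ i (fun j hj => hs _ _ (by simpa using hj)),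
      sum_E1aux _ i (fun j hj => hs _ _ (by simpa using hj))] at h
  exact h

lemma xrec_mem_BQP (hw : w ∈ QAP (2 * n)) : xrec w ∈ BQP n := by
  constructor
  · rintro ⟨⟨i, j⟩, hle⟩
    rcases eq_or_lt_of_le hle with he | hlt
    · have he' : i = j := he
      subst he'
      rw [show (⟨(i, i), hle⟩ : Idx n) = ⟨(i, i), le_refl i⟩ from rfl, xrec_diag]
      exact hw.1 _
    · have hr : w.2 ⟨((E1 i, E1 i), (E1 j, E1 j)), Or.inl (E1_lt_E1 hlt)⟩ =
          w.1 (E1 i, E1 i) * w.1 (E1 j, E1 j) := hw.2.2.2 _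
      rw [xrec_off w hlt hle]
      refine (congrArg (fun v => v = 0 ∨ v = 1) hr).mpr ?_
      rcases hw.1 (E1 i, E1 i) with h1 | h1 <;> rcases hw.1 (E1 j, E1 j) with h2 | h2 <;>
        rw [h1, h2] <;> norm_num
  · intro i j h
    rw [xrec_off w h (le_of_lt h), xrec_diag, xrec_diag]
    exact hw.2.2.2 _

lemma fmap_xrec (hw : w ∈ QAP (2 * n))
    (hs : ∀ a b : Fin (2 * n), blk a ≠ blk b → w.1 (a, b) = 0) :
    fmap (xrec w) = w := by
  have hY : ∀ q : Fin (2 * n) × Fin (2 * n), Ymap (xrec w) q = w.1 q := by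
    rintro ⟨a, b⟩
    by_cases hb : blk a = blk b
    · rcases eq_E1_or_E2 a with ⟨hsa, ha⟩ | ⟨hsa, ha⟩ <;>
        rcases eq_E1_or_E2 b with ⟨hsb, hb'⟩ | ⟨hsb, hb'⟩ <;>
        rw [show (a, b) = ((a : Fin (2 * n)), b) from rfl] <;>
        rw [ha, hb', ← hb]
      · show Ymap (xrec w) (E1 (blk a), E1 (blk a)) = w.1 (E1 (blk a), E1 (blk a))
        simp [Ymap, D_xrec]
      · show Ymap (xrec w) (E1 (blk a), E2 (blk a)) = w.1 (E1 (blk a), E2 (blk a))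
        have h1 := row_E1 hw hs (blk a)
        simp [Ymap, D_xrec]
        linarith
      · show Ymap (xrec w) (E2 (blk a), E1 (blk a)) = w.1 (E2 (blk a), E1 (blk a))
        have h1 := row_E1 hw hs (blk a)
        have h2 := col_E1 hw hs (blk a)
        simp [Ymap, D_xrec]
        linarith
      · show Ymap (xrec w) (E2 (blk a), E2 (blk a)) = w.1 (E2 (blk a), E2 (blk a))
        have h1 := row_E1 hw hs (blk a)
        have h2 := col_E1 hw hs (blk a)
        have h3 := row_E2 hw hs (blk a)
        simp [Ymap, D_xrec]
        linarith
    · rw [hs a b hb]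
      exact if_neg hb
  refine Prod.ext (funext fun q => hY q) (funext fun r => ?_)
  show Zmap (xrec w) r = w.2 r
  rw [Zmap_eq_mul (xrec_mem_BQP hw), hY, hY, ← hw.2.2.2 r]

end Reconstruction

lemma fmap_inj : Function.Injective (fmap : (Idx n → ℝ) → _) := by
  intro x y h
  have hfst : Ymap x = Ymap y := congrArg Prod.fst h
  have hsnd : Zmap x = Zmap y := congrArg Prod.snd h
  have hD : ∀ i, D x i = D y i := by
    intro i
    have := congrFun hfst (E1 i, E1 i)
    simpa [Ymap] using this
  have hQ : ∀ i j : Fin n, i < j → Q x i j = Q y i j := by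
    intro i j hij
    have := congrFun hsnd ⟨((E1 i, E1 i), (E1 j, E1 j)), Or.inl (E1_lt_E1 hij)⟩
    simpa [Zmap, B] using this
  funext p
  obtain ⟨⟨i, j⟩, hle⟩ := p
  rcases eq_or_lt_of_le hle with he | hlt
  · have he' : i = j := he
    subst he'
    exact hD i
  · have hx1 : Q x i j = x ⟨(i, j), hle⟩ := by unfold Q; exact dif_pos hle
    have hy1 : Q y i j = y ⟨(i, j), hle⟩ := by unfold Q; exact dif_pos hle
    rw [← hx1, ← hy1, hQ i j hlt]


section Hull

variable {E : Type*} [AddCommGroup E] [Module ℝ E] [TopologicalSpace E]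

lemma hull_le (S : Set E) (l : E →L[ℝ] ℝ) (c : ℝ) (hb : ∀ s ∈ S, l s ≤ c) :
    ∀ x ∈ convexHull ℝ S, l x ≤ c := fun _ hx =>
  convexHull_min hb (convex_halfSpace_le (IsLinearMap.mk l.map_add l.map_smul) c) hx

lemma hull_ge (T : Set E) (l : E →L[ℝ] ℝ) (c : ℝ) (hb : ∀ s ∈ T, c ≤ l s) :
    ∀ x ∈ convexHull ℝ T, c ≤ l x := fun _ hx =>
  convexHull_min hb (convex_halfSpace_ge (IsLinearMap.mk l.map_add l.map_smul) c) hx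

lemma hull_face (S : Set E) (l : E →L[ℝ] ℝ) (c : ℝ) (hb : ∀ s ∈ S, l s ≤ c)
    (hne : ∃ t ∈ S, l t = c) :
    convexHull ℝ {s ∈ S | l s = c} =
      {x ∈ convexHull ℝ S | ∀ y ∈ convexHull ℝ S, l y ≤ l x} := by
  classical
  obtain ⟨t, htS, htc⟩ := hne
  ext x
  constructor
  · intro hx
    have hxS : x ∈ convexHull ℝ S := convexHull_mono (fun s hs => hs.1) hx
    have hxc : l x = c := le_antisymm (hull_le S l c hb x hxS)
      (hull_ge _ l c (fun s hs => le_of_eq hs.2.symm) x hx)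
    exact ⟨hxS, fun y hy => by rw [hxc]; exact hull_le S l c hb y hy⟩
  · rintro ⟨hxS, hmax⟩
    have hxc : l x = c := le_antisymm (hull_le S l c hb x hxS)
      (htc ▸ hmax t (subset_convexHull ℝ S htS))
    rw [convexHull_eq] at hxS
    obtain ⟨ι, tf, ws, zs, h0, h1, hz, hcm⟩ := hxS
    have hxsum : x = ∑ i ∈ tf, ws i • zs i := by
      rw [← hcm, Finset.centerMass_eq_of_sum_1 _ _ h1]
    have hterm : ∀ i ∈ tf, ws i * l (zs i) = ws i * c := by
      rw [← Finset.sum_eq_sum_iff_of_le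
        (fun i hi => mul_le_mul_of_nonneg_left (hb _ (hz i hi)) (h0 i hi))]
      have hstep : ∑ i ∈ tf, ws i * l (zs i) = l x := by
        rw [hxsum, map_sum]
        exact Finset.sum_congr rfl fun i _ => by rw [map_smul, smul_eq_mul]
      rw [hstep, hxc, ← Finset.sum_mul, h1, one_mul]
    rw [← hcm, ← Finset.centerMass_filter_ne_zero]
    refine Finset.centerMass_mem_convexHull _
      (fun i hi => h0 i (Finset.mem_filter.mp hi).1) ?_ (fun i hi => ?_)
    · rw [Finset.sum_filter_ne_zero, h1]
      norm_num
    · obtain ⟨hit, hiw⟩ := Finset.mem_filter.mp hi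
      exact ⟨hz i hit, mul_left_cancel₀ hiw (hterm i hit)⟩

end Hull

lemma zero_mem_BQP : (0 : Idx n → ℝ) ∈ BQP n := by
  refine ⟨fun p => Or.inl rfl, fun i j h => ?_⟩
  show (0 : ℝ) = 0 * 0
  ring

end Stmt15

/-- For `n ≥ 1`, `conv(BQP_n)` is affinely equivalent to an exposed face of the
quadratic assignment polytope `conv(QAP_{2n})`. -/
theorem stmt15 (n : ℕ) (hn : 1 ≤ n) :
    ∃ F : Set ((Fin (2 * n) × Fin (2 * n) → ℝ) × (QAIdx (2 * n) → ℝ)),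
      IsExposed ℝ (convexHull ℝ (QAP (2 * n))) F ∧
      ∃ φ : (Idx n → ℝ) →ᵃ[ℝ] ((Fin (2 * n) × Fin (2 * n) → ℝ) × (QAIdx (2 * n) → ℝ)),
        Function.Injective φ ∧ φ '' (convexHull ℝ (BQP n)) = F := by
  classical
  set l : ((Fin (2 * n) × Fin (2 * n) → ℝ) × (QAIdx (2 * n) → ℝ)) →L[ℝ] ℝ :=
    LinearMap.toContinuousLinearMap (Stmt15.L n) with hldef
  have hl : ∀ w, l w = Stmt15.L n w := fun w => rfl
  have hphicoe : ⇑(Stmt15.phi n) = Stmt15.fmap := rfl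
  have hTeq : Stmt15.fmap '' BQP n =
      {s ∈ QAP (2 * n) | l s = ((2 * n : ℕ) : ℝ)} := by
    ext w
    constructor
    · rintro ⟨x, hx, rfl⟩
      exact ⟨Stmt15.fmap_mem_QAP hx, Stmt15.L_fmap hx⟩
    · rintro ⟨hw, hLw⟩
      rw [hl] at hLw
      have hsupp : ∀ a b : Fin (2 * n), Stmt15.blk a ≠ Stmt15.blk b → w.1 (a, b) = 0 :=
        fun a b h => (Stmt15.L_eq_iff hw).mp hLw (a, b) h
      exact ⟨Stmt15.xrec w, Stmt15.xrec_mem_BQP hw, Stmt15.fmap_xrec hw hsupp⟩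
  have himg : Stmt15.phi n '' (convexHull ℝ (BQP n)) =
      convexHull ℝ ({s ∈ QAP (2 * n) | l s = ((2 * n : ℕ) : ℝ)}) := by
    rw [AffineMap.image_convexHull, hphicoe, hTeq]
  refine ⟨Stmt15.phi n '' (convexHull ℝ (BQP n)), ?_, Stmt15.phi n, ?_, rfl⟩
  · intro _
    refine ⟨l, ?_⟩
    rw [himg]
    exact Stmt15.hull_face (QAP (2 * n)) l ((2 * n : ℕ) : ℝ)
      (fun s hs => by rw [hl]; exact Stmt15.L_le hs)
      ⟨Stmt15.fmap 0, Stmt15.fmap_mem_QAP Stmt15.zero_mem_BQP,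
        by rw [hl]; exact Stmt15.L_fmap Stmt15.zero_mem_BQP⟩
  · rw [hphicoe]
    exact Stmt15.fmap_inj
end

section
/- Let n ≥ 1, m = 2n, and J = {(i,i) : i = 1,…,m} ∪ {(2i−1, 2i) : i = 1,…,n} ∪ {(2i, 2i−1) : i = 1,…,n} ⊆ Fin m × Fin m. Let DAP_m = {y ∈ ℝ^{m×m} : every y_{ij} ∈ {0,1}, Σ_j y_{ij} = 1 for all i, Σ_i y_{ij} = 1 for all j} be the set of m×m permutation matrices. Then the set F = conv(DAP_m) ∩ {y : y_{ij} = 0 for all (i,j) ∉ J} is an exposed face of the Birkhoff polytope conv(DAP_m), and F is affinely equivalent to the n-dimensional cube [0,1]^n. -/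
def DAP (m : ℕ) : Set (Fin m × Fin m → ℝ) :=
  {y | (∀ q, y q = 0 ∨ y q = 1) ∧
       (∀ i, ∑ j, y (i, j) = 1) ∧
       (∀ j, ∑ i, y (i, j) = 1)}

def Jdap (n : ℕ) : Set (Fin (2 * n) × Fin (2 * n)) :=
  {q | q.1 = q.2 ∨
       (∃ i : ℕ, i < n ∧ (q.1 : ℕ) = 2 * i ∧ (q.2 : ℕ) = 2 * i + 1) ∨
       (∃ i : ℕ, i < n ∧ (q.1 : ℕ) = 2 * i + 1 ∧ (q.2 : ℕ) = 2 * i)}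

namespace Stmt16Aux

lemma mem_Jdap (n : ℕ) (q : Fin (2 * n) × Fin (2 * n)) :
    q ∈ Jdap n ↔ (q.1 : ℕ) / 2 = (q.2 : ℕ) / 2 := by
  have h1 := q.1.2; have h2 := q.2.2
  constructor
  · rintro (h | ⟨i, hi, ha, hb⟩ | ⟨i, hi, ha, hb⟩)
    · rw [h]
    · omega
    · omega
  · intro h
    by_cases he : q.1 = q.2
    · exact Or.inl he
    · have hv : (q.1 : ℕ) ≠ (q.2 : ℕ) := fun hh => he (Prod.ext_iff.mp rfl |>.1 ▸ Fin.ext hh)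
      right
      have : ((q.1:ℕ) = 2*((q.1:ℕ)/2) ∧ (q.2:ℕ) = 2*((q.1:ℕ)/2)+1) ∨
             ((q.1:ℕ) = 2*((q.1:ℕ)/2)+1 ∧ (q.2:ℕ) = 2*((q.1:ℕ)/2)) := by omega
      rcases this with ⟨ha, hb⟩ | ⟨ha, hb⟩
      · exact Or.inl ⟨(q.1:ℕ)/2, by omega, ha, hb⟩
      · exact Or.inr ⟨(q.1:ℕ)/2, by omega, ha, hb⟩

/-- The affine map from the cube to block matrices. -/
noncomputable def phiFun (n : ℕ) (c : Fin n → ℝ) : Fin (2 * n) × Fin (2 * n) → ℝ :=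
  fun q => (if (q.1 : ℕ) / 2 = (q.2 : ℕ) / 2 ∧ q.1 ≠ q.2 then (1:ℝ) else 0) +
    (if q.1 = q.2 then (1:ℝ) else if (q.1 : ℕ) / 2 = (q.2 : ℕ) / 2 then -1 else 0) *
      c ⟨(q.1 : ℕ) / 2, by have := q.1.2; omega⟩

noncomputable def phiLin (n : ℕ) : (Fin n → ℝ) →ₗ[ℝ] (Fin (2 * n) × Fin (2 * n) → ℝ) where
  toFun c := fun q =>
    (if q.1 = q.2 then (1:ℝ) else if (q.1 : ℕ) / 2 = (q.2 : ℕ) / 2 then -1 else 0) *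
      c ⟨(q.1 : ℕ) / 2, by have := q.1.2; omega⟩
  map_add' x y := by funext q; simp [mul_add]
  map_smul' a x := by funext q; simp only [Pi.smul_apply, smul_eq_mul, RingHom.id_apply]; ring

noncomputable def phiMap (n : ℕ) : (Fin n → ℝ) →ᵃ[ℝ] (Fin (2 * n) × Fin (2 * n) → ℝ) where
  toFun := phiFun n
  linear := phiLin n
  map_vadd' p v := by
    funext q
    simp only [phiFun, phiLin, LinearMap.coe_mk, AddHom.coe_mk, vadd_eq_add, Pi.add_apply]
    ring

lemma sum_eq_pair {m : ℕ} (f : Fin m → ℝ) (a b : Fin m) (hab : a ≠ b)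
    (h : ∀ j, j ≠ a → j ≠ b → f j = 0) : ∑ j, f j = f a + f b := by
  rw [← Finset.sum_pair hab]
  refine (Finset.sum_subset (Finset.subset_univ _) fun x _ hx => ?_).symm
  simp only [Finset.mem_insert, Finset.mem_singleton, not_or] at hx
  exact h x hx.1 hx.2

def ptn (n : ℕ) (i : Fin (2 * n)) : Fin (2 * n) :=
  ⟨2 * ((i : ℕ) / 2) + 1 - (i : ℕ) % 2, by have := i.2; omega⟩

lemma ptn_val (n : ℕ) (i : Fin (2 * n)) :
    (ptn n i : ℕ) = 2 * ((i : ℕ) / 2) + 1 - (i : ℕ) % 2 := rfl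

lemma ptn_ne (n : ℕ) (i : Fin (2 * n)) : ptn n i ≠ i := by
  intro h
  have := congrArg Fin.val h
  rw [ptn_val] at this; omega

lemma ptn_div (n : ℕ) (i : Fin (2 * n)) : ((ptn n i : ℕ)) / 2 = (i : ℕ) / 2 := by
  rw [ptn_val]; omega

lemma phiFun_zero_of_ne (n : ℕ) (c : Fin n → ℝ) (a b : Fin (2 * n))
    (h : (a : ℕ) / 2 ≠ (b : ℕ) / 2) : phiFun n c (a, b) = 0 := by
  have hne : a ≠ b := by intro hh; exact h (by rw [hh])
  simp [phiFun, h, hne]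

lemma phiFun_diag (n : ℕ) (c : Fin n → ℝ) (i : Fin (2 * n)) :
    phiFun n c (i, i) = c ⟨(i : ℕ) / 2, by have := i.2; omega⟩ := by
  simp [phiFun]

lemma phiFun_off (n : ℕ) (c : Fin n → ℝ) (a b : Fin (2 * n)) (hne : a ≠ b)
    (hdiv : (a : ℕ) / 2 = (b : ℕ) / 2) :
    phiFun n c (a, b) = 1 - c ⟨(a : ℕ) / 2, by have := a.2; omega⟩ := by
  simp [phiFun, hne, hdiv]; ring

lemma phiFun_row (n : ℕ) (c : Fin n → ℝ) (i : Fin (2 * n)) :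
    ∑ j, phiFun n c (i, j) = 1 := by
  rw [sum_eq_pair (fun j => phiFun n c (i, j)) i (ptn n i) (Ne.symm (ptn_ne n i))
    (fun j hj1 hj2 => ?_)]
  · rw [phiFun_diag, phiFun_off n c i (ptn n i) (Ne.symm (ptn_ne n i)) (ptn_div n i).symm]
    ring
  · apply phiFun_zero_of_ne
    have h1 : (j : ℕ) ≠ (i : ℕ) := fun hh => hj1 (Fin.ext hh)
    have h2 : (j : ℕ) ≠ (ptn n i : ℕ) := fun hh => hj2 (Fin.ext hh)
    rw [ptn_val] at h2
    intro hdd; omega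

lemma phiFun_col (n : ℕ) (c : Fin n → ℝ) (j : Fin (2 * n)) :
    ∑ i, phiFun n c (i, j) = 1 := by
  rw [sum_eq_pair (fun i => phiFun n c (i, j)) j (ptn n j) (Ne.symm (ptn_ne n j))
    (fun i hi1 hi2 => ?_)]
  · rw [phiFun_diag, phiFun_off n c (ptn n j) j (ptn_ne n j) (ptn_div n j)]
    have : (⟨((ptn n j : ℕ)) / 2, by have := (ptn n j).2; omega⟩ : Fin n)
        = ⟨(j : ℕ) / 2, by have := j.2; omega⟩ := Fin.ext (ptn_div n j)
    rw [this]; ring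
  · apply phiFun_zero_of_ne
    have h1 : (i : ℕ) ≠ (j : ℕ) := fun hh => hi1 (Fin.ext hh)
    have h2 : (i : ℕ) ≠ (ptn n j : ℕ) := fun hh => hi2 (Fin.ext hh)
    rw [ptn_val] at h2
    intro hdd; omega

/-- Vertices of the cube map into `DAP`. -/
lemma phiFun_mem_DAP (n : ℕ) (c : Fin n → ℝ) (hc : ∀ i, c i = 0 ∨ c i = 1) :
    phiFun n c ∈ DAP (2 * n) := by
  refine ⟨fun q => ?_, phiFun_row n c, phiFun_col n c⟩
  by_cases hdiv : (q.1 : ℕ) / 2 = (q.2 : ℕ) / 2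
  · by_cases hne : q.1 = q.2
    · obtain ⟨a, b⟩ := q
      simp only at hne
      subst hne
      rw [phiFun_diag]
      exact hc _
    · obtain ⟨a, b⟩ := q
      rw [phiFun_off n c a b hne hdiv]
      rcases hc ⟨(a : ℕ) / 2, by have := a.2; omega⟩ with h | h <;> rw [h] <;> simp
  · obtain ⟨a, b⟩ := q; exact Or.inl (phiFun_zero_of_ne n c a b hdiv)

/-- Facts holding on all of the convex hull. -/
lemma convexHull_DAP_subset (m : ℕ) :
    convexHull ℝ (DAP m) ⊆
      {y | (∀ q, 0 ≤ y q) ∧ (∀ i, ∑ j, y (i, j) = 1) ∧ (∀ j, ∑ i, y (i, j) = 1)} := by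
  apply convexHull_min
  · rintro y ⟨h01, hr, hc⟩
    exact ⟨fun q => by rcases h01 q with h | h <;> rw [h] <;> norm_num, hr, hc⟩
  · rintro y ⟨hy0, hyr, hyc⟩ z ⟨hz0, hzr, hzc⟩ a b ha hb hab
    refine ⟨fun q => ?_, fun i => ?_, fun j => ?_⟩
    · have : (a • y + b • z) q = a * y q + b * z q := rfl
      rw [this]
      exact add_nonneg (mul_nonneg ha (hy0 q)) (mul_nonneg hb (hz0 q))
    · have : ∀ j, (a • y + b • z) (i, j) = a * y (i, j) + b * z (i, j) := fun _ => rfl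
      simp_rw [this, Finset.sum_add_distrib, ← Finset.mul_sum, hyr i, hzr i]
      linarith
    · have : ∀ i, (a • y + b • z) (i, j) = a * y (i, j) + b * z (i, j) := fun _ => rfl
      simp_rw [this, Finset.sum_add_distrib, ← Finset.mul_sum, hyc j, hzc j]
      linarith

/-- The identity permutation matrix. -/
def idm (m : ℕ) : Fin m × Fin m → ℝ := fun q => if q.1 = q.2 then 1 else 0

lemma idm_mem (m : ℕ) : idm m ∈ DAP m := by
  refine ⟨fun q => ?_, fun i => ?_, fun j => ?_⟩
  · unfold idm; split <;> simp
  · simp [idm]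
  · simp [idm]

end Stmt16Aux

open Stmt16Aux in
/-- `F = conv(DAP_{2n}) ∩ {y : y_q = 0 ∀ q ∉ J}` is an exposed face of the Birkhoff
polytope `conv(DAP_{2n})`, affinely equivalent to the cube `[0,1]^n`. -/
theorem stmt16 (n : ℕ) (hn : 1 ≤ n) :
    IsExposed ℝ (convexHull ℝ (DAP (2 * n)))
      (convexHull ℝ (DAP (2 * n)) ∩ {y | ∀ q ∉ Jdap n, y q = 0}) ∧
    ∃ φ : (Fin n → ℝ) →ᵃ[ℝ] (Fin (2 * n) × Fin (2 * n) → ℝ),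
      Function.Injective φ ∧
      φ '' {c | ∀ i, 0 ≤ c i ∧ c i ≤ 1} =
        convexHull ℝ (DAP (2 * n)) ∩ {y | ∀ q ∉ Jdap n, y q = 0} := by
  classical
  have hCfacts := convexHull_DAP_subset (2 * n)
  constructor
  · -- exposedness
    intro _
    set s : Finset (Fin (2 * n) × Fin (2 * n)) :=
      Finset.univ.filter (fun q => q ∉ Jdap n) with hs
    refine ⟨-(∑ q ∈ s, ContinuousLinearMap.proj q), ?_⟩
    have lval : ∀ y : Fin (2 * n) × Fin (2 * n) → ℝ,
        (-(∑ q ∈ s, ContinuousLinearMap.proj (R := ℝ) (φ := fun _ => ℝ) q)) y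
          = -(∑ q ∈ s, y q) := by
      intro y
      simp [ContinuousLinearMap.sum_apply]
    have lnonpos : ∀ y ∈ convexHull ℝ (DAP (2 * n)),
        (-(∑ q ∈ s, ContinuousLinearMap.proj (R := ℝ) (φ := fun _ => ℝ) q)) y ≤ 0 := by
      intro y hy
      rw [lval]
      have h0 := (hCfacts hy).1
      have : 0 ≤ ∑ q ∈ s, y q := Finset.sum_nonneg fun q _ => h0 q
      linarith
    ext x
    constructor
    · rintro ⟨hxC, hx0⟩
      refine ⟨hxC, fun y hy => ?_⟩
      have hx : (-(∑ q ∈ s, ContinuousLinearMap.proj (R := ℝ) (φ := fun _ => ℝ) q)) x = 0 := by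
        rw [lval]
        have : ∑ q ∈ s, x q = 0 :=
          Finset.sum_eq_zero fun q hq => hx0 q (by simpa [hs] using hq)
        rw [this]; ring
      rw [hx]
      exact lnonpos y hy
    · rintro ⟨hxC, hmax⟩
      refine ⟨hxC, fun q hq => ?_⟩
      have hid : idm (2 * n) ∈ convexHull ℝ (DAP (2 * n)) :=
        subset_convexHull ℝ _ (idm_mem (2 * n))
      have hidval : (-(∑ q ∈ s, ContinuousLinearMap.proj (R := ℝ) (φ := fun _ => ℝ) q))
          (idm (2 * n)) = 0 := by
        rw [lval]
        have : ∑ q ∈ s, idm (2 * n) q = 0 := by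
          refine Finset.sum_eq_zero fun q hq => ?_
          have hqJ : q ∉ Jdap n := by simpa [hs] using hq
          have : q.1 ≠ q.2 := fun h => hqJ (Or.inl h)
          simp [idm, this]
        rw [this]; ring
      have h1 := hmax (idm (2 * n)) hid
      rw [hidval] at h1
      have h2 := lnonpos x hxC
      have hx0 : ∑ q ∈ s, x q = 0 := by
        rw [lval] at h1 h2
        linarith
      have h0 := (hCfacts hxC).1
      have := (Finset.sum_eq_zero_iff_of_nonneg (fun q _ => h0 q)).mp hx0
      exact this q (by simp [hs, hq])
  · -- the affine cube
    refine ⟨phiMap n, ?_, ?_⟩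
    · -- injective
      intro c c' h
      funext k
      have hk : 2 * (k : ℕ) < 2 * n := by have := k.2; omega
      have h2 : phiFun n c (⟨2 * k, hk⟩, ⟨2 * k, hk⟩)
          = phiFun n c' (⟨2 * k, hk⟩, ⟨2 * k, hk⟩) :=
        congrFun h ((⟨2 * k, hk⟩ : Fin (2 * n)), (⟨2 * k, hk⟩ : Fin (2 * n)))
      rw [phiFun_diag, phiFun_diag] at h2
      have hkk : (⟨(2 * (k:ℕ)) / 2, by have := k.2; omega⟩ : Fin n) = k :=
        Fin.ext (by simp)
      rwa [hkk] at h2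
    · -- image equality
      have cube_eq : {c : Fin n → ℝ | ∀ i, 0 ≤ c i ∧ c i ≤ 1}
          = convexHull ℝ (Set.pi Set.univ fun _ : Fin n => ({0, 1} : Set ℝ)) := by
        rw [convexHull_pi]
        ext c
        simp only [Set.mem_setOf_eq, Set.mem_pi, Set.mem_univ, forall_const,
          convexHull_pair, segment_eq_Icc zero_le_one, Set.mem_Icc]
      apply Set.Subset.antisymm
      · -- image ⊆ F
        rw [cube_eq, AffineMap.image_convexHull]
        apply convexHull_min
        · rintro y ⟨c, hc, rfl⟩
          have hc01 : ∀ i, c i = 0 ∨ c i = 1 := by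
            intro i
            have := hc i (Set.mem_univ i)
            simpa using this
          constructor
          · exact subset_convexHull ℝ _ (phiFun_mem_DAP n c hc01)
          · intro q hq
            rw [mem_Jdap] at hq
            obtain ⟨a, b⟩ := q
            exact phiFun_zero_of_ne n c a b hq
        · -- F is convex
          refine (convex_convexHull ℝ _).inter ?_
          intro y hy z hz a b ha hb hab q hq
          have : (a • y + b • z) q = a * y q + b * z q := rfl
          rw [this, hy q hq, hz q hq]; ring
      · -- F ⊆ image
        rintro y ⟨hyC, hy0⟩
        obtain ⟨h0, hr, hcc⟩ := hCfacts hyC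
        have hz : ∀ a b : Fin (2 * n), (a : ℕ) / 2 ≠ (b : ℕ) / 2 → y (a, b) = 0 :=
          fun a b h => hy0 (a, b) (fun hJ => h ((mem_Jdap n (a, b)).mp hJ))
        set c : Fin n → ℝ := fun k =>
          y (⟨2 * k, by have := k.2; omega⟩, ⟨2 * k, by have := k.2; omega⟩) with hcdef
        have key : ∀ k : Fin n,
            y (⟨2 * k, by have := k.2; omega⟩, ⟨2 * k + 1, by have := k.2; omega⟩) = 1 - c k ∧
            y (⟨2 * k + 1, by have := k.2; omega⟩, ⟨2 * k, by have := k.2; omega⟩) = 1 - c k ∧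
            y (⟨2 * k + 1, by have := k.2; omega⟩, ⟨2 * k + 1, by have := k.2; omega⟩) = c k := by
          intro k
          have hk := k.2
          set i0 : Fin (2 * n) := ⟨2 * k, by omega⟩ with hi0
          set i1 : Fin (2 * n) := ⟨2 * k + 1, by omega⟩ with hi1
          have hne : i0 ≠ i1 := Fin.ne_of_val_ne (by simp [hi0, hi1])
          have row0 : y (i0, i0) + y (i0, i1) = 1 := by
            rw [← sum_eq_pair (fun j => y (i0, j)) i0 i1 hne (fun j hj1 hj2 => ?_)]
            · exact hr i0
            · refine hz i0 j ?_
              have h1 : (j : ℕ) ≠ (i0 : ℕ) := fun hh => hj1 (Fin.ext hh)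
              have h2 : (j : ℕ) ≠ (i1 : ℕ) := fun hh => hj2 (Fin.ext hh)
              simp only [hi0, hi1] at h1 h2 ⊢
              omega
          have col0 : y (i0, i0) + y (i1, i0) = 1 := by
            rw [← sum_eq_pair (fun i => y (i, i0)) i0 i1 hne (fun i hi1' hi2' => ?_)]
            · exact hcc i0
            · refine hz i i0 ?_
              have h1 : (i : ℕ) ≠ (i0 : ℕ) := fun hh => hi1' (Fin.ext hh)
              have h2 : (i : ℕ) ≠ (i1 : ℕ) := fun hh => hi2' (Fin.ext hh)
              simp only [hi0, hi1] at h1 h2 ⊢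
              omega
          have row1 : y (i1, i0) + y (i1, i1) = 1 := by
            rw [← sum_eq_pair (fun j => y (i1, j)) i0 i1 hne (fun j hj1 hj2 => ?_)]
            · exact hr i1
            · refine hz i1 j ?_
              have h1 : (j : ℕ) ≠ (i0 : ℕ) := fun hh => hj1 (Fin.ext hh)
              have h2 : (j : ℕ) ≠ (i1 : ℕ) := fun hh => hj2 (Fin.ext hh)
              simp only [hi0, hi1] at h1 h2 ⊢
              omega
          have hck : c k = y (i0, i0) := rfl
          refine ⟨by rw [hck]; linarith, by rw [hck]; linarith, by rw [hck]; linarith⟩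
        refine ⟨c, fun k => ?_, ?_⟩
        · constructor
          · exact h0 _
          · have := (key k).1
            have hnn := h0 (⟨2 * k, by have := k.2; omega⟩, ⟨2 * k + 1, by have := k.2; omega⟩)
            linarith
        · -- phiMap n c = y
          show phiFun n c = y
          funext q
          obtain ⟨a, b⟩ := q
          by_cases hdiv : (a : ℕ) / 2 = (b : ℕ) / 2
          · have hkn : (a : ℕ) / 2 < n := by have := a.2; omega
            have hlt : 2 * ((a : ℕ) / 2) < 2 * n := by omega
            have hlt1 : 2 * ((a : ℕ) / 2) + 1 < 2 * n := by have := a.2; omega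
            by_cases hab : a = b
            · subst hab
              rw [phiFun_diag]
              show c ⟨(a : ℕ) / 2, hkn⟩ = y (a, a)
              rcases Nat.even_or_odd (a : ℕ) with he | ho
              · have hv : 2 * ((a : ℕ) / 2) = (a : ℕ) := by
                  obtain ⟨t, ht⟩ := he; omega
                calc c ⟨(a : ℕ) / 2, hkn⟩
                    = y (⟨2 * ((a : ℕ) / 2), hlt⟩, ⟨2 * ((a : ℕ) / 2), hlt⟩) := rfl
                  _ = y (a, a) := congrArg y (Prod.ext (Fin.ext hv) (Fin.ext hv))
              · have hv : 2 * ((a : ℕ) / 2) + 1 = (a : ℕ) := by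
                  obtain ⟨t, ht⟩ := ho; omega
                calc c ⟨(a : ℕ) / 2, hkn⟩
                    = y (⟨2 * ((a : ℕ) / 2) + 1, hlt1⟩, ⟨2 * ((a : ℕ) / 2) + 1, hlt1⟩) :=
                      ((key ⟨(a : ℕ) / 2, hkn⟩).2.2).symm
                  _ = y (a, a) := congrArg y (Prod.ext (Fin.ext hv) (Fin.ext hv))
            · rw [phiFun_off n c a b hab hdiv]
              show 1 - c ⟨(a : ℕ) / 2, hkn⟩ = y (a, b)
              have hvne : (a : ℕ) ≠ (b : ℕ) := fun hh => hab (Fin.ext hh)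
              have hcase : ((a : ℕ) = 2 * ((a : ℕ) / 2) ∧ (b : ℕ) = 2 * ((a : ℕ) / 2) + 1) ∨
                  ((a : ℕ) = 2 * ((a : ℕ) / 2) + 1 ∧ (b : ℕ) = 2 * ((a : ℕ) / 2)) := by
                have := a.2; have := b.2; omega
              rcases hcase with ⟨ha', hb'⟩ | ⟨ha', hb'⟩
              · calc 1 - c ⟨(a : ℕ) / 2, hkn⟩
                    = y (⟨2 * ((a : ℕ) / 2), hlt⟩, ⟨2 * ((a : ℕ) / 2) + 1, hlt1⟩) :=
                      ((key ⟨(a : ℕ) / 2, hkn⟩).1).symm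
                  _ = y (a, b) :=
                      congrArg y (Prod.ext (Fin.ext ha'.symm) (Fin.ext hb'.symm))
              · calc 1 - c ⟨(a : ℕ) / 2, hkn⟩
                    = y (⟨2 * ((a : ℕ) / 2) + 1, hlt1⟩, ⟨2 * ((a : ℕ) / 2), hlt⟩) :=
                      ((key ⟨(a : ℕ) / 2, hkn⟩).2.1).symm
                  _ = y (a, b) :=
                      congrArg y (Prod.ext (Fin.ext ha'.symm) (Fin.ext hb'.symm))
          · rw [phiFun_zero_of_ne n c a b hdiv]
            exact (hz a b hdiv).symm
end

section
/- For every n ≥ 1 there exists a matrix A ∈ {0,1}^{r×d} with d = 2n² columns such that the Boolean quadratic polytope conv(BQP_n) is affinely equivalent to the set partition polytope conv(PART(A)): there is an injective affine map φ : ℝ^{Δ_n} → ℝ^{2n²} with φ(conv(BQP_n)) = conv(PART(A)). -/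
/-- The set partition vertex set of a 0/1 matrix `A`. -/
def PART {r d : ℕ} (A : Fin r → Fin d → ℝ) : Set (Fin d → ℝ) :=
  {x | (∀ j, x j = 0 ∨ x j = 1) ∧ ∀ i, ∑ j, A i j * x j = 1}

/- ### Auxiliary construction -/

abbrev Col (n : ℕ) : Type := Fin n × Fin n × Fin 2
abbrev RowT (n : ℕ) : Type := Fin n × Fin n × Fin 3

/-- The support of each constraint row. -/
def rowS {n : ℕ} (ρ : RowT n) : Finset (Col n) :=
  if ρ.1 < ρ.2.1 then
    if ρ.2.2 = 0 then {(ρ.1,ρ.2.1,0),(ρ.1,ρ.2.1,1),(ρ.2.1,ρ.1,0),(ρ.2.1,ρ.1,1)}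
    else if ρ.2.2 = 1 then {(ρ.1,ρ.2.1,1),(ρ.2.1,ρ.1,1),(ρ.1,ρ.1,0)}
    else {(ρ.1,ρ.2.1,1),(ρ.2.1,ρ.1,0),(ρ.2.1,ρ.2.1,0)}
  else {(ρ.1,ρ.1,0),(ρ.1,ρ.1,1)}

/-- The underlying function of the affine embedding. -/
def gfun {n : ℕ} (x : Idx n → ℝ) (c : Col n) : ℝ :=
  if h : c.1 < c.2.1 then
    if c.2.2 = 1 then x ⟨(c.1, c.2.1), h.le⟩
    else 1 - x ⟨(c.1,c.1), le_rfl⟩ - x ⟨(c.2.1,c.2.1), le_rfl⟩ + x ⟨(c.1,c.2.1), h.le⟩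
  else if h' : c.2.1 < c.1 then
    if c.2.2 = 1 then x ⟨(c.2.1,c.2.1), le_rfl⟩ - x ⟨(c.2.1,c.1), h'.le⟩
    else x ⟨(c.1,c.1), le_rfl⟩ - x ⟨(c.2.1,c.1), h'.le⟩
  else
    if c.2.2 = 1 then x ⟨(c.1,c.1), le_rfl⟩ else 1 - x ⟨(c.1,c.1), le_rfl⟩

section evals
variable {n : ℕ} (x : Idx n → ℝ)

lemma gfun_lt1 {i j : Fin n} (h : i < j) : gfun x (i,j,1) = x ⟨(i,j), h.le⟩ := by
  simp [gfun, h]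

lemma gfun_lt0 {i j : Fin n} (h : i < j) :
    gfun x (i,j,0) = 1 - x ⟨(i,i), le_rfl⟩ - x ⟨(j,j), le_rfl⟩ + x ⟨(i,j), h.le⟩ := by
  simp [gfun, h]

lemma gfun_gt1 {i j : Fin n} (h : i < j) :
    gfun x (j,i,1) = x ⟨(i,i), le_rfl⟩ - x ⟨(i,j), h.le⟩ := by
  simp [gfun, h, h.not_gt]

lemma gfun_gt0 {i j : Fin n} (h : i < j) :
    gfun x (j,i,0) = x ⟨(j,j), le_rfl⟩ - x ⟨(i,j), h.le⟩ := by
  simp [gfun, h, h.not_gt]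

lemma gfun_diag1 (i : Fin n) : gfun x (i,i,1) = x ⟨(i,i), le_rfl⟩ := by
  simp [gfun]

lemma gfun_diag0 (i : Fin n) : gfun x (i,i,0) = 1 - x ⟨(i,i), le_rfl⟩ := by
  simp [gfun]

end evals

/-- The linear part. -/
noncomputable def gLin (n : ℕ) : (Idx n → ℝ) →ₗ[ℝ] (Col n → ℝ) where
  toFun x := fun c => gfun x c - gfun 0 c
  map_add' x y := by
    funext c
    simp only [gfun, Pi.add_apply, Pi.zero_apply]; simp only [Pi.add_def, Pi.zero_def]
    split_ifs <;> ring
  map_smul' a x := by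
    funext c
    simp only [gfun, Pi.smul_apply, Pi.zero_apply, smul_eq_mul, RingHom.id_apply]; simp only [Pi.smul_def, Pi.zero_def, smul_eq_mul]
    split_ifs <;> ring

/-- The affine embedding (into structured coordinates). -/
noncomputable def gAff (n : ℕ) : (Idx n → ℝ) →ᵃ[ℝ] (Col n → ℝ) where
  toFun := gfun
  linear := gLin n
  map_vadd' p v := by
    funext c
    show gfun (v + p) c = (gfun v c - gfun 0 c) + gfun p c
    simp only [gfun, Pi.add_apply, Pi.zero_apply]; simp only [Pi.add_def, Pi.zero_def]
    split_ifs <;> ring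

lemma gAff_apply {n : ℕ} (x : Idx n → ℝ) : (gAff n) x = gfun x := rfl

lemma rowS_lt0 {n : ℕ} {i j : Fin n} (h : i < j) :
    rowS ((i,j,0) : RowT n) = {(i,j,0),(i,j,1),(j,i,0),(j,i,1)} := by simp [rowS, h]

lemma rowS_lt1 {n : ℕ} {i j : Fin n} (h : i < j) :
    rowS ((i,j,1) : RowT n) = {(i,j,1),(j,i,1),(i,i,0)} := by simp [rowS, h]

lemma rowS_lt2 {n : ℕ} {i j : Fin n} (h : i < j) :
    rowS ((i,j,2) : RowT n) = {(i,j,1),(j,i,0),(j,j,0)} := by simp [rowS, h]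

lemma rowS_diag {n : ℕ} {i j : Fin n} (h : ¬ i < j) (t : Fin 3) :
    rowS ((i,j,t) : RowT n) = {(i,i,0),(i,i,1)} := by simp [rowS, h]

lemma sum_row0 {n : ℕ} {i j : Fin n} (h : i < j) (y : Col n → ℝ) :
    ∑ c ∈ rowS ((i,j,0) : RowT n), y c
      = y (i,j,0) + (y (i,j,1) + (y (j,i,0) + y (j,i,1))) := by
  have hne : i ≠ j := h.ne
  rw [rowS_lt0 h,
      Finset.sum_insert (by simp_all [Prod.ext_iff]),
      Finset.sum_insert (by simp_all [Prod.ext_iff]),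
      Finset.sum_insert (by simp_all [Prod.ext_iff]),
      Finset.sum_singleton]

lemma sum_row1 {n : ℕ} {i j : Fin n} (h : i < j) (y : Col n → ℝ) :
    ∑ c ∈ rowS ((i,j,1) : RowT n), y c = y (i,j,1) + (y (j,i,1) + y (i,i,0)) := by
  have hne : i ≠ j := h.ne
  rw [rowS_lt1 h,
      Finset.sum_insert (by simp_all [Prod.ext_iff]),
      Finset.sum_insert (by simp_all [Prod.ext_iff]),
      Finset.sum_singleton]

lemma sum_row2 {n : ℕ} {i j : Fin n} (h : i < j) (y : Col n → ℝ) :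
    ∑ c ∈ rowS ((i,j,2) : RowT n), y c = y (i,j,1) + (y (j,i,0) + y (j,j,0)) := by
  have hne : i ≠ j := h.ne
  rw [rowS_lt2 h,
      Finset.sum_insert (by simp_all [Prod.ext_iff]),
      Finset.sum_insert (by simp_all [Prod.ext_iff]),
      Finset.sum_singleton]

lemma sum_rowdiag {n : ℕ} {i j : Fin n} (h : ¬ i < j) (t : Fin 3) (y : Col n → ℝ) :
    ∑ c ∈ rowS ((i,j,t) : RowT n), y c = y (i,i,0) + y (i,i,1) := by
  rw [rowS_diag h t,
      Finset.sum_insert (by simp [Prod.ext_iff]),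
      Finset.sum_singleton]

lemma gfun_rowsum {n : ℕ} (x : Idx n → ℝ) (ρ : RowT n) :
    ∑ c ∈ rowS ρ, gfun x c = 1 := by
  obtain ⟨i, j, t⟩ := ρ
  by_cases h : i < j
  · fin_cases t
    · show ∑ c ∈ rowS ((i,j,0) : RowT n), gfun x c = 1
      rw [sum_row0 h, gfun_lt0 x h, gfun_lt1 x h, gfun_gt0 x h, gfun_gt1 x h]; ring
    · show ∑ c ∈ rowS ((i,j,1) : RowT n), gfun x c = 1
      rw [sum_row1 h, gfun_lt1 x h, gfun_gt1 x h, gfun_diag0 x i]; ring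
    · show ∑ c ∈ rowS ((i,j,2) : RowT n), gfun x c = 1
      rw [sum_row2 h, gfun_lt1 x h, gfun_gt0 x h, gfun_diag0 x j]; ring
  · rw [sum_rowdiag h t, gfun_diag0 x i, gfun_diag1 x i]; ring

/-- The structured partition set. -/
def PART' (n : ℕ) : Set (Col n → ℝ) :=
  {y | (∀ c, y c = 0 ∨ y c = 1) ∧ ∀ ρ : RowT n, ∑ c ∈ rowS ρ, y c = 1}

lemma image_gAff (n : ℕ) : (gAff n) '' (BQP n) = PART' n := by
  ext y
  constructor
  · rintro ⟨x, ⟨h01, hq⟩, rfl⟩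
    rw [gAff_apply]
    refine ⟨?_, gfun_rowsum x⟩
    rintro ⟨i, j, b⟩
    rcases lt_trichotomy i j with h | h | h
    · fin_cases b
      · show gfun x (i,j,0) = 0 ∨ gfun x (i,j,0) = 1
        rw [gfun_lt0 x h, hq i j h]
        rcases h01 ⟨(i,i), le_rfl⟩ with h1 | h1 <;>
          rcases h01 ⟨(j,j), le_rfl⟩ with h2 | h2 <;> rw [h1, h2] <;> norm_num
      · show gfun x (i,j,1) = 0 ∨ gfun x (i,j,1) = 1
        rw [gfun_lt1 x h]; exact h01 _
    · subst h
      fin_cases b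
      · show gfun x (i,i,0) = 0 ∨ gfun x (i,i,0) = 1
        rw [gfun_diag0 x i]
        rcases h01 ⟨(i,i), le_rfl⟩ with h1 | h1 <;> rw [h1] <;> norm_num
      · show gfun x (i,i,1) = 0 ∨ gfun x (i,i,1) = 1
        rw [gfun_diag1 x i]; exact h01 _
    · fin_cases b
      · show gfun x (i,j,0) = 0 ∨ gfun x (i,j,0) = 1
        rw [gfun_gt0 x h, hq j i h]
        rcases h01 ⟨(j,j), le_rfl⟩ with h1 | h1 <;>
          rcases h01 ⟨(i,i), le_rfl⟩ with h2 | h2 <;> rw [h1, h2] <;> norm_num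
      · show gfun x (i,j,1) = 0 ∨ gfun x (i,j,1) = 1
        rw [gfun_gt1 x h, hq j i h]
        rcases h01 ⟨(j,j), le_rfl⟩ with h1 | h1 <;>
          rcases h01 ⟨(i,i), le_rfl⟩ with h2 | h2 <;> rw [h1, h2] <;> norm_num
  · rintro ⟨h01, hrow⟩
    have hdiag : ∀ i : Fin n, y (i,i,0) + y (i,i,1) = 1 := by
      intro i
      have := hrow (i, i, 0)
      rwa [sum_rowdiag (lt_irrefl i) 0 y] at this
    set x : Idx n → ℝ := fun p => y (p.1.1, p.1.2, 1) with hxdef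
    refine ⟨x, ⟨fun p => h01 _, ?_⟩, ?_⟩
    · intro i j h
      have e1 := hrow (i, j, 0); rw [sum_row0 h] at e1
      have e2 := hrow (i, j, 1); rw [sum_row1 h] at e2
      have e3 := hrow (i, j, 2); rw [sum_row2 h] at e3
      have d1 := hdiag i
      have d2 := hdiag j
      show y (i,j,1) = y (i,i,1) * y (j,j,1)
      rcases h01 (i,i,1) with a | a <;> rcases h01 (j,j,1) with b | b <;>
        rcases h01 (i,j,1) with c | c <;> rcases h01 (j,i,1) with d | d <;>
        rcases h01 (j,i,0) with e | e <;> rcases h01 (i,j,0) with f | f <;>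
        rw [a, b, c] <;> norm_num <;> linarith
    · funext ⟨i, j, b⟩
      rw [gAff_apply]
      rcases lt_trichotomy i j with h | h | h
      · have e1 := hrow (i, j, 0); rw [sum_row0 h] at e1
        have e2 := hrow (i, j, 1); rw [sum_row1 h] at e2
        have e3 := hrow (i, j, 2); rw [sum_row2 h] at e3
        have d1 := hdiag i
        have d2 := hdiag j
        fin_cases b
        · show gfun x (i,j,0) = y (i,j,0)
          rw [gfun_lt0 _ h]
          show 1 - y (i,i,1) - y (j,j,1) + y (i,j,1) = y (i,j,0)
          linarith
        · show gfun x (i,j,1) = y (i,j,1)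
          rw [gfun_lt1 _ h]
      · subst h
        have d1 := hdiag i
        fin_cases b
        · show gfun x (i,i,0) = y (i,i,0)
          rw [gfun_diag0]
          show 1 - y (i,i,1) = y (i,i,0)
          linarith
        · show gfun x (i,i,1) = y (i,i,1)
          rw [gfun_diag1]
      · have e1 := hrow (j, i, 0); rw [sum_row0 h] at e1
        have e2 := hrow (j, i, 1); rw [sum_row1 h] at e2
        have e3 := hrow (j, i, 2); rw [sum_row2 h] at e3
        have d1 := hdiag i
        have d2 := hdiag j
        fin_cases b
        · show gfun x (i,j,0) = y (i,j,0)
          rw [gfun_gt0 _ h]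
          show y (i,i,1) - y (j,i,1) = y (i,j,0)
          linarith
        · show gfun x (i,j,1) = y (i,j,1)
          rw [gfun_gt1 _ h]
          show y (j,j,1) - y (j,i,1) = y (i,j,1)
          linarith

lemma gAff_injective (n : ℕ) : Function.Injective (gAff n) := by
  intro x x' hxx'
  funext p
  obtain ⟨⟨i, j⟩, hij⟩ := p
  rcases eq_or_lt_of_le hij with h | h
  · have := congrFun hxx' (i, i, 1)
    rw [gAff_apply, gAff_apply, gfun_diag1, gfun_diag1] at this
    cases h
    exact this
  · have := congrFun hxx' (i, j, 1)
    rw [gAff_apply, gAff_apply, gfun_lt1 x h, gfun_lt1 x' h] at this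
    exact this

/-- For every `n ≥ 1` there is a 0/1 matrix `A` with `d = 2n²` columns such that
`conv(BQP_n)` is affinely equivalent to the set partition polytope `conv(PART(A))`. -/
theorem stmt17 (n : ℕ) (hn : 1 ≤ n) :
    ∃ (r : ℕ) (A : Fin r → Fin (2 * n ^ 2) → ℝ),
      (∀ i j, A i j = 0 ∨ A i j = 1) ∧
      ∃ φ : (Idx n → ℝ) →ᵃ[ℝ] (Fin (2 * n ^ 2) → ℝ),
        Function.Injective φ ∧
        φ '' (convexHull ℝ (BQP n)) = convexHull ℝ (PART A) := by
  have ec : Fintype.card (Col n) = 2 * n ^ 2 := by simp; ring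
  have fc : Fintype.card (RowT n) = 3 * n ^ 2 := by simp; ring
  let e : Col n ≃ Fin (2 * n ^ 2) := Fintype.equivFinOfCardEq ec
  let f : RowT n ≃ Fin (3 * n ^ 2) := Fintype.equivFinOfCardEq fc
  refine ⟨3 * n ^ 2, fun i k => if e.symm k ∈ rowS (f.symm i) then 1 else 0,
    fun i k => by dsimp only; split <;> simp, ?_⟩
  let R : (Col n → ℝ) →ₗ[ℝ] (Fin (2 * n ^ 2) → ℝ) := LinearMap.funLeft ℝ ℝ e.symm
  refine ⟨R.toAffineMap.comp (gAff n), ?_, ?_⟩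
  · have hR : Function.Injective ⇑R := by
      intro y z hyz
      funext c
      have := congrFun hyz (e c)
      simpa [R, LinearMap.funLeft] using this
    rw [AffineMap.coe_comp]
    exact hR.comp (gAff_injective n)
  · have key : (⇑R) '' PART' n =
        PART (fun i k => if e.symm k ∈ rowS (f.symm i) then (1:ℝ) else 0) := by
      ext z
      constructor
      · rintro ⟨y, ⟨h01, hrow⟩, rfl⟩
        refine ⟨fun k => h01 _, fun i => ?_⟩
        show ∑ k, (if e.symm k ∈ rowS (f.symm i) then (1:ℝ) else 0) * y (e.symm k) = 1
        have h2 : ∑ k : Fin (2*n^2),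
              (if e.symm k ∈ rowS (f.symm i) then (1:ℝ) else 0) * y (e.symm k)
            = ∑ c : Col n, (if c ∈ rowS (f.symm i) then (1:ℝ) else 0) * y c :=
          Fintype.sum_equiv e.symm _ _ (fun k => rfl)
        rw [h2]
        simp only [ite_mul, one_mul, zero_mul]
        rw [Finset.sum_ite_mem, Finset.univ_inter]
        exact hrow _
      · rintro ⟨h01, hrow⟩
        refine ⟨z ∘ e, ⟨fun c => h01 (e c), fun ρ => ?_⟩, ?_⟩
        · have := hrow (f ρ)
          simp only [Equiv.symm_apply_apply] at this
          have h2 : ∑ k : Fin (2*n^2), (if e.symm k ∈ rowS ρ then (1:ℝ) else 0) * z k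
              = ∑ c : Col n, (if c ∈ rowS ρ then (1:ℝ) else 0) * z (e c) :=
            (Fintype.sum_equiv e _ _ (fun c => by simp)).symm
          rw [h2] at this
          simp only [ite_mul, one_mul, zero_mul] at this
          rw [Finset.sum_ite_mem, Finset.univ_inter] at this
          exact this
        · funext k
          simp [R, LinearMap.funLeft]
    rw [AffineMap.image_convexHull]
    congr 1
    rw [AffineMap.coe_comp, Set.image_comp, image_gAff]
    exact key
end
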